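/- Let q ∈ UCRPQ(a, a*) over a finite alphabet Σ and let A ⊆ Σ. If q is A-bounded, then q ≡ q(A, Z), where Z = ‖q‖³ · N · |vars(q)| · Π_{w ∈ W} |w|. -/

import Mathlib

namespace Paper

/-! ## Words -/

/-- `wpow w n` is the word `w` repeated `n` times. -/
def wpow {α : Type} (w : List α) (n : ℕ) : List α := (List.replicate n w).flatten

/-! ## Graph databases -/

/-- A graph database over the alphabet `α`: a finite set of vertices together with
labelled edges. -/
structure GDB (α : Type) : Type 1 where
  V : Type
  finV : Finite V
  edges : Set (V × α × V)

/-! ## Conjunctive queries -/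

/-- A (Boolean) conjunctive query over `α`: a finite set of variables and a set of
atoms `x —a→ y` with `a ∈ α`. -/
structure CQ (α : Type) : Type 1 where
  V : Type
  finV : Finite V
  atoms : Set (V × α × V)

variable {α : Type}

/-- `h` is a homomorphism from the CQ `p` to the CQ `p'`. -/
def CQ.Hom (p p' : CQ α) (h : p.V → p'.V) : Prop :=
  ∀ x a y, (x, a, y) ∈ p.atoms → (h x, a, h y) ∈ p'.atoms

/-- There is a homomorphism from the CQ `p` to the CQ `p'`. -/
def CQ.homTo (p p' : CQ α) : Prop := ∃ h, p.Hom p' h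

/-- There is a homomorphism from the CQ `p` to the graph database `G`. -/
def CQ.homToG (p : CQ α) (G : GDB α) : Prop :=
  ∃ h : p.V → G.V, ∀ x a y, (x, a, y) ∈ p.atoms → (h x, a, h y) ∈ G.edges

/-! ## CRPQs -/

/-- A (Boolean) conjunctive regular path query over alphabet `α` with variables `V`:
a finite conjunction of atoms `src i —lang i→ tgt i`. -/
structure CRPQ (α V : Type) where
  k : ℕ
  src : Fin k → V
  lang : Fin k → Set (List α)
  tgt : Fin k → V

variable {V : Type}

/-! ## Expansions -/

/-- Variables of an expansion before collapsing equality atoms: the original variables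
plus, for each atom `i` expanded by the word `w i`, the fresh variables
`z_1, …, z_{|w i| - 1}`. -/
def RawVar (q : CRPQ α V) (w : Fin q.k → List α) : Type :=
  V ⊕ (Σ i : Fin q.k, Fin ((w i).length - 1))

instance {q : CRPQ α V} [Finite V] {w : Fin q.k → List α} : Finite (RawVar q w) := by
  unfold RawVar; infer_instance

/-- The `j`-th variable (`0 ≤ j ≤ |w i|`) on the path expanding atom `i`:
position `0` is the source variable, position `|w i|` the target variable, and the
intermediate positions are fresh variables. -/
def node (q : CRPQ α V) (w : Fin q.k → List α) (i : Fin q.k) (j : ℕ) : RawVar q w :=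
  if j = 0 then Sum.inl (q.src i)
  else if j = (w i).length then Sum.inl (q.tgt i)
  else if h : j - 1 < (w i).length - 1 then Sum.inr ⟨i, ⟨j - 1, h⟩⟩
  else Sum.inl (q.src i)

/-- The equality atoms produced by `ε`-expansions: `src i = tgt i` whenever `w i = ε`.
(The expansion collapses the equivalence they generate.) -/
def eqRel (q : CRPQ α V) (w : Fin q.k → List α) : RawVar q w → RawVar q w → Prop :=
  fun x y => ∃ i, w i = [] ∧ x = Sum.inl (q.src i) ∧ y = Sum.inl (q.tgt i)

/-- The expansion of the CRPQ `q` obtained by expanding each atom `i` with the word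
`w i`: each atom is replaced by its `w i`-expansion, and equality atoms are collapsed. -/
def expansion (q : CRPQ α V) [Finite V] (w : Fin q.k → List α) : CQ α where
  V := Quot (eqRel q w)
  finV := Finite.of_surjective (Quot.mk _) fun x => Quot.exists_rep x
  atoms := { t | ∃ (i : Fin q.k) (j : ℕ) (hj : j < (w i).length),
    t = (Quot.mk _ (node q w i j), (w i).get ⟨j, hj⟩, Quot.mk _ (node q w i (j + 1))) }

/-- `Exp q`: the set of all expansions of the CRPQ `q`. -/
def Exp (q : CRPQ α V) [Finite V] : Set (CQ α) :=
  { p | ∃ w : Fin q.k → List α, (∀ i, w i ∈ q.lang i) ∧ p = expansion q w }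

/-- `Expm q m`: the set of all `m`-expansions of the CRPQ `q`. -/
def Expm (q : CRPQ α V) [Finite V] (m : ℕ) : Set (CQ α) :=
  { p | ∃ w : Fin q.k → List α,
      (∀ i, w i ∈ q.lang i) ∧ (∀ i, (w i).length ≤ m) ∧ p = expansion q w }

/-! ## UCRPQs, satisfaction, containment, boundedness -/

/-- The set of expansions of a UCRPQ (a finite disjunction of CRPQs). -/
def ExpU (Q : List (CRPQ α V)) [Finite V] : Set (CQ α) :=
  { p | ∃ q ∈ Q, p ∈ Exp q }

/-- The set of `m`-expansions of a UCRPQ. -/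
def ExpmU (Q : List (CRPQ α V)) [Finite V] (m : ℕ) : Set (CQ α) :=
  { p | ∃ q ∈ Q, p ∈ Expm q m }

/-- Satisfaction of a (possibly infinite) disjunction of CQs by a graph database. -/
def SatSet (S : Set (CQ α)) (G : GDB α) : Prop := ∃ p ∈ S, p.homToG G

/-- `G ⊨ Q` for a UCRPQ `Q`: some expansion of `Q` maps homomorphically into `G`. -/
def Sat (Q : List (CRPQ α V)) [Finite V] (G : GDB α) : Prop := SatSet (ExpU Q) G

/-- Containment of queries (viewed as properties of graph databases):
every graph database satisfying the first satisfies the second. -/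
def Contained (P P' : GDB α → Prop) : Prop := ∀ G, P G → P' G

/-- Equivalence of queries (viewed as properties of graph databases). -/
def QEquiv (P P' : GDB α → Prop) : Prop := ∀ G, P G ↔ P' G

/-- A query is bounded iff it is equivalent to some UCQ (finite disjunction of CQs). -/
def Bounded (P : GDB α → Prop) : Prop :=
  ∃ Φ : List (CQ α), ∀ G, P G ↔ ∃ p ∈ Φ, p.homToG G


/-! ## The class UCRPQ(SSF, w*) -/

/-- An atom language in the class (SSF, w*): either a succinct star-free expression
(denoting a finite language), or `w*` for a word `w`. -/
inductive AtomLang (α : Type) : Type where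
  | ssf (L : Set (List α)) (h : L.Finite) : AtomLang α
  | star (w : List α) : AtomLang α

variable {α V : Type}

/-- The language denoted by an atom of the class (SSF, w*). -/
def AtomLang.language : AtomLang α → Set (List α)
  | .ssf L _ => L
  | .star w => { u | ∃ n, u = wpow w n }

/-- A CRPQ all of whose atom languages are SSF expressions or expressions `w*`. -/
structure SCRPQ (α V : Type) where
  k : ℕ
  src : Fin k → V
  lang : Fin k → AtomLang α
  tgt : Fin k → V

/-- The underlying CRPQ of an SCRPQ. -/
def SCRPQ.toCRPQ (q : SCRPQ α V) : CRPQ α V :=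
  ⟨q.k, q.src, fun i => (q.lang i).language, q.tgt⟩

/-- The underlying UCRPQ of a UCRPQ in the class (SSF, w*). -/
def toU (Q : List (SCRPQ α V)) : List (CRPQ α V) := Q.map SCRPQ.toCRPQ

/-- Satisfaction for UCRPQs of the class (SSF, w*). -/
def SatS (Q : List (SCRPQ α V)) [Finite V] (G : GDB α) : Prop := Sat (toU Q) G

/-- `AtomLang.cut m`: replace `w*` with `w^{≤m} = {w^n : n ≤ m}`; SSF atoms unchanged. -/
def AtomLang.cut (m : ℕ) : AtomLang α → AtomLang α
  | .ssf L h => .ssf L h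
  | .star w => .ssf (wpow w '' Set.Iic m) ((Set.finite_Iic m).image _)

/-- `q(m)` for a CRPQ: replace every expression `w*` with `w^{≤m}`. -/
def SCRPQ.cut (m : ℕ) (q : SCRPQ α V) : SCRPQ α V :=
  ⟨q.k, q.src, fun i => (q.lang i).cut m, q.tgt⟩

/-- `q(m)` for a UCRPQ: replace every expression `w*` with `w^{≤m}`. -/
def qcut (Q : List (SCRPQ α V)) (m : ℕ) : List (SCRPQ α V) := Q.map (SCRPQ.cut m)

/-- `‖Q‖`: number of atoms of the UCRPQ `Q`. -/
def natoms (Q : List (SCRPQ α V)) : ℕ := (Q.map SCRPQ.k).sum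

/-- The set `W` of words `w` such that `w*` labels a recursive atom of `Q`. -/
def recWords (Q : List (SCRPQ α V)) : Set (List α) :=
  { w | ∃ q ∈ Q, ∃ i : Fin q.k, q.lang i = AtomLang.star w }

/-- `N`: the maximum length of a word in the language of a non-recursive atom of `Q`. -/
noncomputable def nrBound (Q : List (SCRPQ α V)) : ℕ :=
  sSup { n | ∃ q ∈ Q, ∃ i : Fin q.k, ∃ (L : Set (List α)) (h : L.Finite),
    q.lang i = AtomLang.ssf L h ∧ ∃ u ∈ L, u.length = n }

/-- `Z := ‖Q‖³ · N · |vars(Q)| · Π_{w ∈ W} |w|`. -/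
noncomputable def Zbound (Q : List (SCRPQ α V)) [Fintype V] : ℕ :=
  natoms Q ^ 3 * nrBound Q * Fintype.card V * ∏ᶠ w ∈ recWords Q, w.length

/-- `Z⁺ := ‖Q‖ · Z + 1`. -/
noncomputable def Zplus (Q : List (SCRPQ α V)) [Fintype V] : ℕ :=
  natoms Q * Zbound Q + 1

/-! ## Letter-boundedness -/

/-- Membership in the class UCRPQ(SSF, a*): atoms are SSF or `a*` for a letter `a`. -/
def AtomLang.inSSFaStar : AtomLang α → Prop
  | .ssf _ _ => True
  | .star w => ∃ a, w = [a]

/-- Membership in the class UCRPQ(a, a*): every atom language is `{a}` or `{a}*`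
for a letter `a`. -/
def AtomLang.in_a_aStar : AtomLang α → Prop
  | .ssf L _ => ∃ a : α, L = {[a]}
  | .star w => ∃ a, w = [a]

/-- An atom language which is an SSF expression or `a*` only for letters `a ∉ A`. -/
def AtomLang.okOutside (A : Set α) : AtomLang α → Prop
  | .ssf _ _ => True
  | .star w => ∃ a, a ∉ A ∧ w = [a]

open Classical in
/-- Replace `a*` with `a^{≤m} = {ε, a, …, a^m}` for every letter `a ∈ A`. -/
noncomputable def AtomLang.restrict (A : Set α) (m : ℕ) : AtomLang α → AtomLang α
  | .ssf L h => .ssf L h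
  | .star w => if ∃ a ∈ A, w = [a]
      then .ssf (wpow w '' Set.Iic m) ((Set.finite_Iic m).image _)
      else .star w

/-- `q(A, m)` (also `q[A ↦ m]`) for a CRPQ. -/
noncomputable def SCRPQ.restrict (A : Set α) (m : ℕ) (q : SCRPQ α V) : SCRPQ α V :=
  ⟨q.k, q.src, fun i => (q.lang i).restrict A m, q.tgt⟩

/-- `Q(A, m)` (also `Q[A ↦ m]`): the result of replacing in `Q` every atom language
`a*` with `a ∈ A` by `a^{≤m}`. -/
noncomputable def qrestrict (Q : List (SCRPQ α V)) (A : Set α) (m : ℕ) :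
    List (SCRPQ α V) := Q.map (SCRPQ.restrict A m)

/-- `Q` is `A`-bounded: `Q` is equivalent to some UCRPQ whose atom languages are SSF
expressions or expressions `a*` only for letters `a ∉ A`. -/
def BddIn (Q : List (SCRPQ α V)) [Finite V] (A : Set α) : Prop :=
  ∃ (n : ℕ) (Q' : List (SCRPQ α (Fin n))),
    (∀ d ∈ Q', ∀ i : Fin d.k, (d.lang i).okOutside A) ∧ QEquiv (SatS Q) (SatS Q')
/-! ## Auxiliary material for statement15 -/

section Aux

variable {α : Type} {V : Type}

lemma wpow_single (a : α) (n : ℕ) : wpow [a] n = List.replicate n a := by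
  induction n with
  | zero => rfl
  | succ n ih =>
    simp only [wpow, List.replicate_succ, List.flatten_cons] at *
    rw [ih]; rfl

@[simp] lemma wpow_length_single (a : α) (n : ℕ) : (wpow [a] n).length = n := by
  rw [wpow_single]; simp

/-- A walk in `G` along the word `w`. -/
def GWalk (G : GDB α) (w : List α) (u v : G.V) : Prop :=
  ∃ f : ℕ → G.V, f 0 = u ∧ f w.length = v ∧
    ∀ (t : ℕ) (h : t < w.length), (f t, w.get ⟨t, h⟩, f (t + 1)) ∈ G.edges

/-- A walk in `G` of length `n` all of whose edges are labelled `a`. -/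
def AWalk (G : GDB α) (a : α) (n : ℕ) (u v : G.V) : Prop :=
  ∃ f : ℕ → G.V, f 0 = u ∧ f n = v ∧ ∀ t, t < n → (f t, a, f (t + 1)) ∈ G.edges

lemma gwalk_replicate {G : GDB α} {a : α} {n : ℕ} {u v : G.V} :
    GWalk G (List.replicate n a) u v ↔ AWalk G a n u v := by
  unfold GWalk AWalk
  constructor
  · rintro ⟨f, h0, hn, he⟩
    refine ⟨f, h0, by simpa using hn, fun t ht => ?_⟩
    have := he t (by simpa using ht)
    simpa using this
  · rintro ⟨f, h0, hn, he⟩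
    refine ⟨f, h0, by simpa using hn, fun t ht => ?_⟩
    have := he t (by simpa using ht)
    simpa using this

lemma AWalk.zero {G : GDB α} {a : α} (u : G.V) : AWalk G a 0 u u :=
  ⟨fun _ => u, rfl, rfl, by omega⟩

lemma AWalk.trans {G : GDB α} {a : α} {m n : ℕ} {u x v : G.V}
    (h1 : AWalk G a m u x) (h2 : AWalk G a n x v) : AWalk G a (m + n) u v := by
  obtain ⟨f, hf0, hfm, hfe⟩ := h1
  obtain ⟨g, hg0, hgn, hge⟩ := h2
  have hfg : ∀ t, t = m → f t = g (t - m) := by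
    intro t ht; subst ht; simp [hfm, hg0]
  refine ⟨fun t => if t < m then f t else g (t - m), ?_, ?_, ?_⟩
  · rcases Nat.eq_zero_or_pos m with rfl | hm
    · have := hfg 0 rfl
      simp only [Nat.lt_irrefl, if_false, Nat.sub_zero]
      rw [← this, hf0]
    · simp [hm, hf0]
  · have h1 : ¬ (m + n < m) := by omega
    simp only [h1, if_false]
    rw [show m + n - m = n from by omega, hgn]
  · intro t ht
    by_cases h : t < m
    · by_cases h' : t + 1 < m
      · simpa [h, h'] using hfe t h
      · have hm : t + 1 = m := by omega
        simp only [h, if_true, h', if_false]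
        rw [← hfg (t+1) hm]
        exact hfe t h
    · have h' : ¬ t + 1 < m := by omega
      simp only [h, h', if_false]
      rw [show t + 1 - m = t - m + 1 from by omega]
      exact hge (t - m) (by omega)

/-- Mapping a walk through a homomorphism of graph databases. -/
lemma GWalk.map {G G' : GDB α} (h : G.V → G'.V)
    (hh : ∀ u c v, (u, c, v) ∈ G.edges → (h u, c, h v) ∈ G'.edges)
    {w : List α} {u v : G.V} (hw : GWalk G w u v) : GWalk G' w (h u) (h v) := by
  obtain ⟨f, h0, hn, he⟩ := hw
  exact ⟨fun t => h (f t), by simp only [h0], by simp only [hn], fun t ht => hh _ _ _ (he t ht)⟩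

/-- Placement semantics of an SCRPQ disjunct in a graph database. -/
def Models (G : GDB α) (d : SCRPQ α V) (w : Fin d.k → List α) : Prop :=
  (∀ i, w i ∈ (d.lang i).language) ∧
  ∃ ρ : V → G.V, ∀ i, GWalk G (w i) (ρ (d.src i)) (ρ (d.tgt i))

lemma Models.comp {G G' : GDB α} (h : G.V → G'.V)
    (hh : ∀ u c v, (u, c, v) ∈ G.edges → (h u, c, h v) ∈ G'.edges)
    {d : SCRPQ α V} {w : Fin d.k → List α} (hm : Models G d w) : Models G' d w := by
  obtain ⟨hw, ρ, hρ⟩ := hm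
  exact ⟨hw, h ∘ ρ, fun i => (hρ i).map h hh⟩

/-- Key lemma: homomorphisms from an expansion into `G` correspond to placements
  of the variables together with walks. -/
lemma expansion_homToG_iff [Finite V] (q : CRPQ α V) (w : Fin q.k → List α) (G : GDB α) :
    (expansion q w).homToG G ↔
      ∃ ρ : V → G.V, ∀ i, GWalk G (w i) (ρ (q.src i)) (ρ (q.tgt i)) := by
  constructor
  · rintro ⟨h, hh⟩
    refine ⟨fun x => h (Quot.mk _ (Sum.inl x)),
      fun i => ⟨fun t => h (Quot.mk _ (node q w i t)), ?_, ?_, ?_⟩⟩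
    · simp [node]
    · by_cases h0 : (w i).length = 0
      · rw [h0]
        have hq : Quot.mk (eqRel q w) (Sum.inl (q.src i)) = Quot.mk _ (Sum.inl (q.tgt i)) :=
          Quot.sound ⟨i, List.length_eq_zero_iff.mp h0, rfl, rfl⟩
        simp [node, hq]; rfl
      · simp [node, h0]
    · intro t ht
      exact hh _ _ _ ⟨i, t, ht, rfl⟩
  · rintro ⟨ρ, hρ⟩
    choose f hf0 hflen hfe using hρ
    have hresp : ∀ x y, eqRel q w x y →
        (fun x => match x with
          | Sum.inl y => ρ y
          | Sum.inr z => f z.1 ((z.2 : ℕ) + 1)) x =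
        (fun x => match x with
          | Sum.inl y => ρ y
          | Sum.inr z => f z.1 ((z.2 : ℕ) + 1)) y := by
      rintro x y ⟨i, hwi, rfl, rfl⟩
      show ρ (q.src i) = ρ (q.tgt i)
      have h1 := hf0 i
      have h2 := hflen i
      rw [hwi] at h2
      simp at h2
      rw [← h1, ← h2]
    refine ⟨Quot.lift _ hresp, ?_⟩
    have key : ∀ i (t : ℕ), t ≤ (w i).length →
        Quot.lift _ hresp (Quot.mk _ (node q w i t)) = f i t := by
      intro i t ht
      rcases Nat.eq_zero_or_pos t with rfl | htpos
      · have hnode : node q w i 0 = Sum.inl (q.src i) := by simp [node]; rfl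
        rw [hnode]
        show ρ (q.src i) = f i 0
        exact (hf0 i).symm
      · by_cases hlen : t = (w i).length
        · have hne : t ≠ 0 := by omega
          have hl0 : (w i).length ≠ 0 := by omega
          have hnode : node q w i t = Sum.inl (q.tgt i) := by
            simp [node, hne, hlen, hl0]; rfl
          rw [hnode]
          show ρ (q.tgt i) = f i t
          rw [hlen]
          exact (hflen i).symm
        · have h1 : t ≠ 0 := by omega
          have h2 : t - 1 < (w i).length - 1 := by omega
          have hnode : node q w i t = Sum.inr ⟨i, ⟨t - 1, h2⟩⟩ := by
            simp [node, h1, hlen, h2]; rfl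
          rw [hnode]
          show f i (t - 1 + 1) = f i t
          congr 1
          omega
    rintro u c v ⟨i, j, hj, heq⟩
    replace heq := Prod.ext_iff.mp heq
    obtain ⟨hu, heq2⟩ := heq
    replace heq2 := Prod.ext_iff.mp heq2
    obtain ⟨hc, hv⟩ := heq2
    simp only at hu hc hv
    rw [hu, hv, hc, key i j (by omega), key i (j+1) (by omega)]
    exact hfe i j hj

/-- The canonical graph database of a CQ. -/
def CQ.toGDB (p : CQ α) : GDB α := ⟨p.V, p.finV, p.atoms⟩

/-- The canonical model of a disjunct with chosen words, as a graph database. -/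
noncomputable abbrev EM [Finite V] (q : CRPQ α V) (w : Fin q.k → List α) : GDB α :=
  (expansion q w).toGDB

lemma satS_iff [Finite V] (Q : List (SCRPQ α V)) (G : GDB α) :
    SatS Q G ↔ ∃ d ∈ Q, ∃ w, Models G d w := by
  unfold SatS Sat SatSet ExpU toU Exp Models
  constructor
  · rintro ⟨p, ⟨qq, hqq, w, hw, rfl⟩, hhom⟩
    rw [List.mem_map] at hqq
    obtain ⟨d, hd, rfl⟩ := hqq
    rw [expansion_homToG_iff] at hhom
    exact ⟨d, hd, w, hw, hhom⟩
  · rintro ⟨d, hd, w, hw, hρ⟩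
    exact ⟨expansion (SCRPQ.toCRPQ d) w,
      ⟨SCRPQ.toCRPQ d, List.mem_map_of_mem hd, w, hw, rfl⟩,
      (expansion_homToG_iff _ _ _).mpr hρ⟩

/-- A disjunct models its own canonical model. -/
lemma models_self [Finite V] (d : SCRPQ α V) (w : Fin d.k → List α)
    (hw : ∀ i, w i ∈ (d.lang i).language) :
    Models (EM (SCRPQ.toCRPQ d) w) d w := by
  refine ⟨hw, fun x => Quot.mk _ (Sum.inl x),
    fun i => ⟨fun t => Quot.mk _ (node (SCRPQ.toCRPQ d) w i t), ?_, ?_, ?_⟩⟩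
  · show Quot.mk _ (node d.toCRPQ w i 0) = Quot.mk _ (Sum.inl (d.src i))
    have : node d.toCRPQ w i 0 = Sum.inl (d.src i) := by simp [node]; rfl
    rw [this]; rfl
  · show Quot.mk _ (node d.toCRPQ w i (w i).length) = Quot.mk _ (Sum.inl (d.tgt i))
    by_cases h0 : (w i).length = 0
    · rw [h0]
      have h1 : node d.toCRPQ w i 0 = Sum.inl (d.src i) := by simp [node]; rfl
      rw [h1]
      exact Quot.sound ⟨i, List.length_eq_zero_iff.mp h0, rfl, rfl⟩
    · have h1 : node d.toCRPQ w i (w i).length = Sum.inl (d.tgt i) := by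
        simp [node, h0]; rfl
      rw [h1]; rfl
  · intro t ht
    exact ⟨i, t, ht, rfl⟩


section Canon

variable {α V : Type} [Finite V] (q : CRPQ α V) (w : Fin q.k → List α)

/-- The `j`-th vertex of the path of atom `i` in the canonical model. -/
noncomputable def nuV (i : Fin q.k) (j : ℕ) : (EM q w).V := Quot.mk _ (node q w i j)

lemma node_zero (i : Fin q.k) : node q w i 0 = Sum.inl (q.src i) := by simp [node]; rfl

lemma node_len {i : Fin q.k} (h : (w i).length ≠ 0) :
    node q w i ((w i).length) = Sum.inl (q.tgt i) := by simp [node, h]; rfl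

lemma node_mid {i : Fin q.k} {j : ℕ} (h1 : j ≠ 0) (h2 : j ≠ (w i).length)
    (h3 : j - 1 < (w i).length - 1) :
    node q w i j = Sum.inr ⟨i, ⟨j - 1, h3⟩⟩ := by simp [node, h1, h2, h3]; rfl

/-- The location of a vertex of the canonical model: `some (i, j)` if it is the `j`-th
(interior) vertex on the path of atom `i`, `none` if it is a variable vertex. -/
def locV : (EM q w).V → Option (Fin q.k × ℕ) :=
  Quot.lift (fun x => match x with
    | Sum.inl _ => none
    | Sum.inr z => some (z.1, (z.2 : ℕ) + 1))
    (by rintro x y ⟨i, hwi, rfl, rfl⟩; rfl)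

@[simp] lemma locV_nu_zero (i : Fin q.k) : locV q w (nuV q w i 0) = none := by
  unfold nuV; rw [node_zero]; rfl

@[simp] lemma locV_nu_len (i : Fin q.k) : locV q w (nuV q w i ((w i).length)) = none := by
  unfold nuV
  by_cases h : (w i).length = 0
  · rw [h, node_zero]; rfl
  · rw [node_len q w h]; rfl

lemma locV_nu_mid {i : Fin q.k} {j : ℕ} (h1 : 0 < j) (h2 : j < (w i).length) :
    locV q w (nuV q w i j) = some (i, j) := by
  unfold nuV
  have h3 : j - 1 < (w i).length - 1 := by omega
  rw [node_mid q w (by omega) (by omega) h3]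
  show some (i, ((⟨j - 1, h3⟩ : Fin ((w i).length - 1)) : ℕ) + 1) = some (i, j)
  simp
  omega

lemma locV_eq_some {u : (EM q w).V} {i : Fin q.k} {j : ℕ}
    (h : locV q w u = some (i, j)) :
    1 ≤ j ∧ j < (w i).length ∧ u = nuV q w i j := by
  obtain ⟨x, rfl⟩ := Quot.exists_rep u
  cases x with
  | inl y => simp [locV] at h
  | inr z =>
    obtain ⟨i', p⟩ := z
    have : some (i', (p : ℕ) + 1) = some (i, j) := h
    rw [Option.some.injEq, Prod.ext_iff] at this
    obtain ⟨h1, h2⟩ := this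
    simp only at h1 h2
    subst h1
    have hp := p.isLt
    refine ⟨by omega, by omega, ?_⟩
    unfold nuV
    have h3 : j - 1 < (w i').length - 1 := by omega
    have hfin : p = ⟨j - 1, h3⟩ := Fin.ext (by simp; omega)
    rw [node_mid q w (by omega) (by omega) h3, ← hfin]

lemma em_edge_iff {u v : (EM q w).V} {c : α} :
    (u, c, v) ∈ (EM q w).edges ↔
    ∃ (i : Fin q.k) (j : ℕ) (hj : j < (w i).length),
      u = nuV q w i j ∧ c = (w i).get ⟨j, hj⟩ ∧ v = nuV q w i (j + 1) := by
  show (u, c, v) ∈ (expansion q w).atoms ↔ _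
  constructor
  · rintro ⟨i, j, hj, heq⟩
    replace heq := Prod.ext_iff.mp heq
    obtain ⟨h1, heq2⟩ := heq
    replace heq2 := Prod.ext_iff.mp heq2
    exact ⟨i, j, hj, h1, heq2.1, heq2.2⟩
  · rintro ⟨i, j, hj, h1, h2, h3⟩
    exact ⟨i, j, hj, Prod.ext_iff.mpr ⟨h1, Prod.ext_iff.mpr ⟨h2, h3⟩⟩⟩

lemma edge_out {u v : (EM q w).V} {c : α} {i : Fin q.k} {j : ℕ}
    (h : (u, c, v) ∈ (EM q w).edges) (hl : locV q w u = some (i, j)) :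
    ∃ (hj : j < (w i).length), c = (w i).get ⟨j, hj⟩ ∧ v = nuV q w i (j + 1) := by
  rw [em_edge_iff] at h
  obtain ⟨i', j', hj', hu, hc, hv⟩ := h
  subst hu
  rcases Nat.eq_zero_or_pos j' with rfl | hpos
  · simp at hl
  · rw [locV_nu_mid q w hpos hj'] at hl
    rw [Option.some.injEq, Prod.ext_iff] at hl
    obtain ⟨h1, h2⟩ := hl
    simp only at h1 h2
    subst h1; subst h2
    exact ⟨hj', hc, hv⟩

lemma edge_in {u v : (EM q w).V} {c : α} {i : Fin q.k} {j : ℕ}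
    (h : (u, c, v) ∈ (EM q w).edges) (hl : locV q w v = some (i, j)) :
    u = nuV q w i (j - 1) ∧
      ∃ (hj : j - 1 < (w i).length), c = (w i).get ⟨j - 1, hj⟩ := by
  rw [em_edge_iff] at h
  obtain ⟨i', j', hj', hu, hc, hv⟩ := h
  subst hv
  by_cases hlen : j' + 1 = (w i').length
  · rw [hlen] at hl; simp at hl
  · have hlt : j' + 1 < (w i').length := by omega
    rw [locV_nu_mid q w (by omega) hlt] at hl
    rw [Option.some.injEq, Prod.ext_iff] at hl
    obtain ⟨h1, h2⟩ := hl
    simp only at h1 h2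
    subst h1
    have : j - 1 = j' := by omega
    subst this
    exact ⟨hu, hj', hc⟩

lemma forced_run {f : ℕ → (EM q w).V} {a : α} {L : ℕ}
    (hedge : ∀ t, t < L → (f t, a, f (t + 1)) ∈ (EM q w).edges)
    {t₀ p : ℕ} {i : Fin q.k} (hf : f t₀ = nuV q w i p) (hp : 1 ≤ p) :
    ∀ s, t₀ + s ≤ L → p + s ≤ (w i).length → f (t₀ + s) = nuV q w i (p + s) := by
  intro s
  induction s with
  | zero => intro _ _; simpa using hf
  | succ s ih =>
    intro hsL hslen
    have h1 := ih (by omega) (by omega)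
    have hmid : locV q w (f (t₀ + s)) = some (i, p + s) := by
      rw [h1]; exact locV_nu_mid q w (by omega) (by omega)
    have he := hedge (t₀ + s) (by omega)
    obtain ⟨hj, _, hv⟩ := edge_out q w he hmid
    rw [show t₀ + (s + 1) = t₀ + s + 1 from by omega, hv,
      show p + (s + 1) = p + s + 1 from by omega]

lemma run_awalk {i : Fin q.k} {a : α} (hrep : w i = List.replicate ((w i).length) a)
    {p p' : ℕ} (hpp : p ≤ p') (hlen : p' ≤ (w i).length) :
    AWalk (EM q w) a (p' - p) (nuV q w i p) (nuV q w i p') := by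
  have hgetall : ∀ (j : ℕ) (hj : j < (w i).length), (w i).get ⟨j, hj⟩ = a := by
    intro j hj
    have h2 := List.get_of_eq hrep ⟨j, hj⟩
    simpa using h2
  refine ⟨fun s => nuV q w i (p + s), by simp, ?_, ?_⟩
  · show nuV q w i (p + (p' - p)) = nuV q w i p'
    rw [show p + (p' - p) = p' from by omega]
  · intro t ht
    have hj : p + t < (w i).length := by omega
    rw [em_edge_iff]
    refine ⟨i, p + t, hj, rfl, (hgetall _ hj).symm, ?_⟩
    show nuV q w i (p + (t + 1)) = nuV q w i ((p + t) + 1)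
    rw [show p + (t + 1) = (p + t) + 1 from by omega]

end Canon

/-- Walks whose edges come from a finite set can be shortened to length at most the
cardinality of that set. -/
lemma awalk_shorten {α : Type} {G : GDB α} (S : Finset (G.V × α × G.V))
    (hS : ∀ e ∈ S, e ∈ G.edges) (a : α) :
    ∀ (n : ℕ) (u v : G.V),
      (∃ f : ℕ → G.V, f 0 = u ∧ f n = v ∧ ∀ t, t < n → (f t, a, f (t + 1)) ∈ S) →
      ∃ n' ≤ S.card, AWalk G a n' u v := by
  intro n
  induction n using Nat.strong_induction_on with
  | _ n ih =>
    intro u v hex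
    obtain ⟨f, hf0, hfn, hfe⟩ := hex
    by_cases hn : n ≤ S.card
    · exact ⟨n, hn, f, hf0, hfn, fun t ht => hS _ (hfe t ht)⟩
    · push_neg at hn
      have hcard : Fintype.card {e // e ∈ S} < Fintype.card (Fin n) := by
        simp only [Fintype.card_coe, Fintype.card_fin]
        omega
      obtain ⟨t, t', htt', heq⟩ := Fintype.exists_ne_map_eq_of_card_lt
        (fun t : Fin n => (⟨(f t, a, f (t + 1)), hfe t t.isLt⟩ : {e // e ∈ S})) hcard
      wlog hlt : (t : ℕ) < (t' : ℕ) generalizing t t'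
      · refine this t' t (Ne.symm htt') heq.symm ?_
        have : (t : ℕ) ≠ (t' : ℕ) := fun hc => htt' (Fin.ext hc)
        omega
      have heq2 : f (t : ℕ) = f (t' : ℕ) := by
        have := Subtype.ext_iff.mp heq
        rw [Prod.ext_iff] at this
        exact this.1
      set δ := (t' : ℕ) - (t : ℕ) with hδ
      have hδpos : 0 < δ := by omega
      have hkey : ∀ s, s = (t : ℕ) → f s = f (s + δ) := by
        intro s hs
        subst hs
        rw [show (t : ℕ) + δ = (t' : ℕ) from by omega]
        exact heq2
      refine ih (n - δ) (by omega) u v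
        ⟨fun s => if s < (t : ℕ) then f s else f (s + δ), ?_, ?_, ?_⟩
      · show (if 0 < (t : ℕ) then f 0 else f (0 + δ)) = u
        rcases Nat.eq_zero_or_pos (t : ℕ) with h0 | hpos
        · have h2 := hkey 0 h0.symm
          rw [h0]
          simp only [Nat.lt_irrefl, if_false]
          rw [← h2, hf0]
        · simp [hpos, hf0]
      · show (if n - δ < (t : ℕ) then f (n - δ) else f (n - δ + δ)) = v
        have h1 : ¬ (n - δ < (t : ℕ)) := by omega
        simp only [h1, if_false]
        rw [show n - δ + δ = n from by omega, hfn]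
      · intro s hs
        by_cases h : s < (t : ℕ)
        · by_cases h' : s + 1 < (t : ℕ)
          · simpa only [h, h', if_true] using hfe s (by omega)
          · have hs1 : s + 1 = (t : ℕ) := by omega
            have := hkey (s + 1) hs1
            simp only [h, if_true, h', if_false]
            rw [← this]
            exact hfe s (by omega)
        · have h' : ¬ s + 1 < (t : ℕ) := by omega
          simp only [h, h', if_false]
          rw [show s + 1 + δ = s + δ + 1 from by omega]
          exact hfe (s + δ) (by omega)

section NuExtra

variable {α V : Type} [Finite V] (q : CRPQ α V) (w : Fin q.k → List α)

lemma nu_zero_eq_src (i : Fin q.k) :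
    nuV q w i 0 = Quot.mk _ (Sum.inl (q.src i)) := by
  unfold nuV; rw [node_zero]; rfl

lemma nu_len_eq_tgt (i : Fin q.k) :
    nuV q w i ((w i).length) = Quot.mk _ (Sum.inl (q.tgt i)) := by
  by_cases h : (w i).length = 0
  · rw [h]
    unfold nuV; rw [node_zero]
    exact Quot.sound ⟨i, List.length_eq_zero_iff.mp h, rfl, rfl⟩
  · unfold nuV; rw [node_len _ _ h]; rfl

lemma nu_mid_eq (i : Fin q.k) (t : ℕ) (h1 : 0 < t) (h2 : t < (w i).length) :
    nuV q w i t = Quot.mk _ (Sum.inr ⟨i, ⟨t - 1, by omega⟩⟩) := by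
  unfold nuV; rw [node_mid q w (by omega) (by omega) (by omega)]; rfl

end NuExtra

section Transfer

variable {α V : Type} [Finite V] (q : CRPQ α V)
variable (wo ws : Fin q.k → List α) (I : Finset (Fin q.k)) (T : ℕ)
variable (F : Fin q.k → ℕ → ℕ)

/-- A vertex in the interior of a pumped run. -/
def PIem (u : (EM q ws).V) : Prop := ∃ i ∈ I, ∃ p, locV q ws u = some (i, p)

/-- The compression map from the pumped canonical model to the original one. -/
noncomputable def Psi (hne : ∀ i, ws i = [] → wo i = []) :
    (EM q ws).V → (EM q wo).V :=
  Quot.lift (fun x => match x with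
    | Sum.inl y => Quot.mk _ (Sum.inl y)
    | Sum.inr z => nuV q wo z.1 (if z.1 ∈ I then F z.1 ((z.2 : ℕ) + 1) else (z.2 : ℕ) + 1))
    (by
      rintro x y ⟨i, hwi, rfl, rfl⟩
      exact Quot.sound ⟨i, hne i hwi, rfl, rfl⟩)

variable (hne : ∀ i, ws i = [] → wo i = [])
variable (hlen_ws : ∀ i ∈ I, (ws i).length = T)
variable (hws_eq : ∀ i ∉ I, ws i = wo i)
variable (hF0 : ∀ i ∈ I, F i 0 = 0)
variable (hFT : ∀ i ∈ I, F i T = (wo i).length)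

lemma Psi_inl (y : V) :
    Psi q wo ws I F hne (Quot.mk _ (Sum.inl y)) = Quot.mk _ (Sum.inl y) := rfl

include hlen_ws hws_eq hF0 hFT in
lemma Psi_nu (i : Fin q.k) (t : ℕ) (ht : t ≤ (ws i).length) :
    Psi q wo ws I F hne (nuV q ws i t) = nuV q wo i (if i ∈ I then F i t else t) := by
  rcases Nat.eq_zero_or_pos t with rfl | htpos
  · rw [nu_zero_eq_src]; erw [Psi_inl]
    have h0 : (if i ∈ I then F i 0 else 0) = 0 := by
      split
      · exact hF0 i (by assumption)
      · rfl
    rw [h0, nu_zero_eq_src]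
  · by_cases hlen : t = (ws i).length
    · subst hlen
      rw [nu_len_eq_tgt]; erw [Psi_inl]
      by_cases hi : i ∈ I
      · rw [if_pos hi, hlen_ws i hi, hFT i hi, nu_len_eq_tgt]
      · rw [if_neg hi, show (ws i).length = (wo i).length from by rw [hws_eq i hi], nu_len_eq_tgt]
    · have hmid : 0 < t ∧ t < (ws i).length := ⟨htpos, by omega⟩
      rw [nu_mid_eq q ws i t hmid.1 hmid.2]
      show nuV q wo i (if i ∈ I then F i (((⟨t - 1, by omega⟩ : Fin ((ws i).length - 1)) : ℕ) + 1)
        else ((⟨t - 1, by omega⟩ : Fin ((ws i).length - 1)) : ℕ) + 1) = _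
      have : ((⟨t - 1, by omega⟩ : Fin ((ws i).length - 1)) : ℕ) + 1 = t := by simp; omega
      rw [this]

include hlen_ws hws_eq hF0 hFT in
/-- Transfer of a non-pumped edge. -/
lemma core_edge {u v : (EM q ws).V} {c : α}
    (hT2 : 2 ≤ T)
    (h : (u, c, v) ∈ (EM q ws).edges)
    (hu : ¬ PIem q ws I u) (hv : ¬ PIem q ws I v) :
    ∃ (i : Fin q.k) (t : ℕ) (ht : t < (wo i).length), i ∉ I ∧
      Psi q wo ws I F hne u = nuV q wo i t ∧ c = (wo i).get ⟨t, ht⟩ ∧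
      Psi q wo ws I F hne v = nuV q wo i (t + 1) := by
  rw [em_edge_iff] at h
  obtain ⟨i, t, ht, hu', hc, hv'⟩ := h
  by_cases hi : i ∈ I
  · exfalso
    have hlT := hlen_ws i hi
    rcases Nat.eq_zero_or_pos t with rfl | htpos
    · apply hv
      refine ⟨i, hi, 1, ?_⟩
      rw [hv']
      exact locV_nu_mid q ws (by omega) (by omega)
    · apply hu
      refine ⟨i, hi, t, ?_⟩
      rw [hu']
      exact locV_nu_mid q ws htpos ht
  · have hwe := hws_eq i hi
    have htlt : t < (wo i).length := by rw [← hwe]; exact ht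
    refine ⟨i, t, htlt, hi, ?_, ?_, ?_⟩
    · rw [hu', Psi_nu q wo ws I T F hne hlen_ws hws_eq hF0 hFT i t (by omega), if_neg hi]
    · rw [hc]
      exact (List.get_of_eq hwe ⟨t, ht⟩).trans (by congr 1)
    · rw [hv', Psi_nu q wo ws I T F hne hlen_ws hws_eq hF0 hFT i (t + 1) (by omega), if_neg hi]

variable (a : α) (S : Finset ((EM q wo).V × α × (EM q wo).V)) (m Kp : ℕ)
variable (hSmem : ∀ e ∈ S, e ∈ (EM q wo).edges)
variable (hSin : ∀ i ∉ I, ∀ (t : ℕ) (ht : t < (wo i).length),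
  (wo i).get ⟨t, ht⟩ = a → (nuV q wo i t, a, nuV q wo i (t + 1)) ∈ S)
variable (hT2 : 2 ≤ T) (hTm : m < T)
variable (hrun : ∀ i ∈ I, ∃ c : α,
  ws i = List.replicate T c ∧ wo i = List.replicate ((wo i).length) c)
variable (hFmono : ∀ i ∈ I, ∀ p p', p ≤ p' → F i p ≤ F i p')
variable (hFle : ∀ i ∈ I, ∀ p, F i p ≤ (wo i).length)
variable (hlow : ∀ j ∈ I, ∀ b, b ≤ m → F j b ≤ Kp)
variable (hhigh : ∀ j ∈ I, ∀ p, T - m ≤ p → p < T → (wo j).length - F j p ≤ Kp)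

include hlen_ws hws_eq hF0 hFT hSmem hSin hT2 hTm hrun hFle hlow in
lemma transfer_core_start (f : ℕ → (EM q ws).V) (L : ℕ) (hL : L ≤ m)
    (hedge : ∀ t, t < L → (f t, a, f (t + 1)) ∈ (EM q ws).edges)
    (h0 : ¬ PIem q ws I (f 0)) :
    ∃ L' ≤ S.card + Kp,
      AWalk (EM q wo) a L' (Psi q wo ws I F hne (f 0)) (Psi q wo ws I F hne (f L)) := by
  classical
  by_cases hall : ∀ t, t ≤ L → ¬ PIem q ws I (f t)
  · have hsub : ∀ t, t < L →
        (Psi q wo ws I F hne (f t), a, Psi q wo ws I F hne (f (t + 1))) ∈ S := by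
      intro t ht
      obtain ⟨i, t', ht', hiI, hu, hc, hv⟩ :=
        core_edge q wo ws I T F hne hlen_ws hws_eq hF0 hFT hT2 (hedge t ht)
          (hall t (by omega)) (hall (t + 1) (by omega))
      rw [hu, hv]
      exact hSin i hiI t' ht' hc.symm
    obtain ⟨L', hL', hwalk⟩ := awalk_shorten S hSmem a L
      (Psi q wo ws I F hne (f 0)) (Psi q wo ws I F hne (f L))
      ⟨fun t => Psi q wo ws I F hne (f t), rfl, rfl, hsub⟩
    exact ⟨L', by omega, hwalk⟩
  · push_neg at hall
    obtain ⟨t₁, ht₁L, ht₁⟩ := hall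
    have hex : ∃ t, t ≤ L ∧ PIem q ws I (f t) := ⟨t₁, ht₁L, ht₁⟩
    obtain ⟨ht₀L, j, hjI, p, hloc⟩ := Nat.find_spec hex
    obtain ⟨hp1, hpT, hfeq⟩ := locV_eq_some q ws hloc
    set t₀ := Nat.find hex with ht₀def
    have hmin : ∀ s, s < t₀ → ¬ (s ≤ L ∧ PIem q ws I (f s)) := fun s hs => Nat.find_min hex hs
    have hlenT := hlen_ws j hjI
    have ht₀pos : 0 < t₀ := by
      rcases Nat.eq_zero_or_pos t₀ with h | h
      · exfalso
        apply h0
        rw [h] at hloc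
        exact ⟨j, hjI, p, hloc⟩
      · exact h
    have hedge0 := hedge (t₀ - 1) (by omega)
    have hstep : t₀ - 1 + 1 = t₀ := by omega
    rw [hstep] at hedge0
    obtain ⟨hu_eq, hjlt, hc_eq⟩ := edge_in q ws hedge0 hloc
    have hp_eq : p = 1 := by
      by_contra hp2
      have hlocm : locV q ws (f (t₀ - 1)) = some (j, p - 1) := by
        rw [hu_eq]
        exact locV_nu_mid q ws (by omega) (by omega)
      exact hmin (t₀ - 1) (by omega) ⟨by omega, j, hjI, p - 1, hlocm⟩
    obtain ⟨cj, hwsrep, hworep⟩ := hrun j hjI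
    have hc_a : a = cj := by
      rw [hc_eq]
      have h2 := List.get_of_eq hwsrep ⟨p - 1, hjlt⟩
      simpa using h2
    have hfeq1 : f t₀ = nuV q ws j 1 := by rw [hfeq, hp_eq]
    set β := L - t₀ + 1 with hβdef
    have hfL : f L = nuV q ws j β := by
      have hfr := forced_run q ws hedge hfeq1 (le_refl 1) (L - t₀) (by omega)
        (by rw [hlenT]; omega)
      rw [show t₀ + (L - t₀) = L from by omega] at hfr
      rw [hfr]
      congr 1
      omega
    have hcore : ∀ t, t ≤ t₀ - 1 → ¬ PIem q ws I (f t) := by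
      intro t ht hPI
      exact hmin t (by omega) ⟨by omega, hPI⟩
    have hsub : ∀ t, t < t₀ - 1 →
        (Psi q wo ws I F hne (f t), a, Psi q wo ws I F hne (f (t + 1))) ∈ S := by
      intro t ht
      obtain ⟨i, t', ht', hiI, hu, hc, hv⟩ :=
        core_edge q wo ws I T F hne hlen_ws hws_eq hF0 hFT hT2 (hedge t (by omega))
          (hcore t (by omega)) (hcore (t + 1) (by omega))
      rw [hu, hv]
      exact hSin i hiI t' ht' hc.symm
    obtain ⟨L₁, hL₁, hwalk₁⟩ := awalk_shorten S hSmem a (t₀ - 1)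
      (Psi q wo ws I F hne (f 0)) (Psi q wo ws I F hne (f (t₀ - 1)))
      ⟨fun t => Psi q wo ws I F hne (f t), rfl, rfl, hsub⟩
    have h1 : Psi q wo ws I F hne (f (t₀ - 1)) = nuV q wo j 0 := by
      rw [hu_eq, hp_eq]
      have := Psi_nu q wo ws I T F hne hlen_ws hws_eq hF0 hFT j 0 (by omega)
      rw [this, if_pos hjI, hF0 j hjI]
    have h2 : Psi q wo ws I F hne (f L) = nuV q wo j (F j β) := by
      rw [hfL, Psi_nu q wo ws I T F hne hlen_ws hws_eq hF0 hFT j β (by rw [hlenT]; omega),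
        if_pos hjI]
    have hrw : AWalk (EM q wo) cj (F j β - 0) (nuV q wo j 0) (nuV q wo j (F j β)) :=
      run_awalk q wo hworep (by omega) (hFle j hjI β)
    rw [← hc_a] at hrw
    rw [h1] at hwalk₁
    rw [← h2] at hrw
    have hFβ : F j β ≤ Kp := hlow j hjI β (by omega)
    refine ⟨L₁ + (F j β - 0), by omega, AWalk.trans hwalk₁ hrw⟩

include hlen_ws hws_eq hF0 hFT hSmem hSin hT2 hTm hrun hFmono hFle hlow hhigh in
lemma transfer_awalk (f : ℕ → (EM q ws).V) (L : ℕ) (hL : L ≤ m)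
    (hedge : ∀ t, t < L → (f t, a, f (t + 1)) ∈ (EM q ws).edges)
    (hstart : ∀ j p, j ∈ I → locV q ws (f 0) = some (j, p) →
      ∀ L'', L'' ≤ m → p + L'' ≤ T → F j (p + L'') - F j p ≤ Kp) :
    ∃ L' ≤ Kp + (S.card + Kp),
      AWalk (EM q wo) a L' (Psi q wo ws I F hne (f 0)) (Psi q wo ws I F hne (f L)) := by
  rcases Nat.eq_zero_or_pos L with rfl | hLpos
  · exact ⟨0, by omega, AWalk.zero _⟩
  by_cases h0 : PIem q ws I (f 0)
  · obtain ⟨j, hjI, p, hloc⟩ := h0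
    obtain ⟨hp1, hpT, hfeq⟩ := locV_eq_some q ws hloc
    have hlenT := hlen_ws j hjI
    obtain ⟨cj, hwsrep, hworep⟩ := hrun j hjI
    have hc_a : a = cj := by
      have he0 := hedge 0 hLpos
      obtain ⟨hj', hc', _⟩ := edge_out q ws he0 hloc
      rw [hc']
      have h2 := List.get_of_eq hwsrep ⟨p, hj'⟩
      simpa using h2
    by_cases hio : L ≤ T - p
    · have hfr := forced_run q ws hedge hfeq hp1 L (by omega) (by rw [hlenT]; omega)
      rw [zero_add] at hfr
      have h1 : Psi q wo ws I F hne (f 0) = nuV q wo j (F j p) := by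
        rw [hfeq, Psi_nu q wo ws I T F hne hlen_ws hws_eq hF0 hFT j p (by omega),
          if_pos hjI]
      have h2 : Psi q wo ws I F hne (f L) = nuV q wo j (F j (p + L)) := by
        rw [hfr, Psi_nu q wo ws I T F hne hlen_ws hws_eq hF0 hFT j (p + L)
          (by rw [hlenT]; omega), if_pos hjI]
      refine ⟨F j (p + L) - F j p, ?_, ?_⟩
      · have := hstart j p hjI hloc L hL (by rw [hlenT] at hpT; omega)
        omega
      · rw [hc_a, h1, h2]
        exact run_awalk q wo hworep (hFmono j hjI p (p + L) (by omega)) (hFle j hjI _)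
    · push_neg at hio
      set s₀ := T - p with hs₀def
      have hs₀L : s₀ ≤ L := by omega
      have hfs₀ : f s₀ = nuV q ws j T := by
        have hfr := forced_run q ws hedge hfeq hp1 s₀ (by omega) (by rw [hlenT]; omega)
        rw [zero_add] at hfr
        rw [hfr]
        congr 1
        rw [hlenT] at hpT
        omega
      have hnPI : ¬ PIem q ws I (f s₀) := by
        rintro ⟨j', hj', p', hp'⟩
        rw [hfs₀, show T = (ws j).length from hlenT.symm, locV_nu_len] at hp'
        exact Option.some_ne_none _ hp'.symm
      obtain ⟨L₂, hL₂, hwalk₂⟩ := transfer_core_start q wo ws I T F hne hlen_ws hws_eq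
        hF0 hFT a S m Kp hSmem hSin hT2 hTm hrun hFle hlow (fun s => f (s₀ + s))
        (L - s₀) (by omega)
        (fun t ht => by
          have := hedge (s₀ + t) (by omega)
          rwa [show s₀ + t + 1 = s₀ + (t + 1) from by omega] at this)
        (by
          show ¬ PIem q ws I (f (s₀ + 0))
          rwa [Nat.add_zero])
      have h1 : Psi q wo ws I F hne (f 0) = nuV q wo j (F j p) := by
        rw [hfeq, Psi_nu q wo ws I T F hne hlen_ws hws_eq hF0 hFT j p (by omega),
          if_pos hjI]
      have h3 : Psi q wo ws I F hne (f (s₀ + 0)) = nuV q wo j ((wo j).length) := by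
        rw [Nat.add_zero, hfs₀,
          Psi_nu q wo ws I T F hne hlen_ws hws_eq hF0 hFT j T (by rw [hlenT]),
          if_pos hjI, hFT j hjI]
      have hinit : AWalk (EM q wo) cj ((wo j).length - F j p)
          (nuV q wo j (F j p)) (nuV q wo j ((wo j).length)) :=
        run_awalk q wo hworep (hFle j hjI p) (le_refl _)
      rw [← hc_a] at hinit
      rw [h3] at hwalk₂
      have hend : f (s₀ + (L - s₀)) = f L := by
        congr 1
        omega
      rw [hend] at hwalk₂
      have hKp1 : (wo j).length - F j p ≤ Kp := by
        refine hhigh j hjI p ?_ ?_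
        · omega
        · rw [hlenT] at hpT; omega
      refine ⟨((wo j).length - F j p) + L₂, by omega, ?_⟩
      rw [h1]
      exact AWalk.trans hinit hwalk₂
  · obtain ⟨L', hL', hwalk⟩ := transfer_core_start q wo ws I T F hne hlen_ws hws_eq
      hF0 hFT a S m Kp hSmem hSin hT2 hTm hrun hFle hlow f L hL hedge h0
    exact ⟨L', by omega, hwalk⟩

end Transfer

section StepA

variable {α : Type}

/-- A bound on the length of words in an atom language (zero for recursive atoms). -/
noncomputable def langBound : AtomLang α → ℕ
  | .ssf _ h => h.toFinset.sup List.length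
  | .star _ => 0

lemma langBound_le {L : Set (List α)} {h : L.Finite} {u : List α} (hu : u ∈ L) :
    u.length ≤ langBound (.ssf L h) :=
  Finset.le_sup (f := List.length) (h.mem_toFinset.mpr hu)

/-- In an expansion of a disjunct whose recursive atoms avoid `A`, walks labelled by a
letter of `A` can be shortened to a length bounded in terms of the disjunct only. -/
lemma bstar_shorten {V' : Type} [Finite V'] {A : Set α} (d2 : SCRPQ α V')
    (w2 : Fin d2.k → List α)
    (hw2 : ∀ i, w2 i ∈ (d2.lang i).language)
    (hok : ∀ i : Fin d2.k, (d2.lang i).okOutside A) (b : α) (hbA : b ∈ A)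
    {u v : (EM (SCRPQ.toCRPQ d2) w2).V} {n : ℕ}
    (hwalk : AWalk (EM (SCRPQ.toCRPQ d2) w2) b n u v) :
    ∃ n' ≤ ∑ i : Fin d2.k, langBound (d2.lang i),
      AWalk (EM (SCRPQ.toCRPQ d2) w2) b n' u v := by
  classical
  set q2 := SCRPQ.toCRPQ d2 with hq2
  set dom : Finset ((_ : Fin d2.k) × ℕ) :=
    Finset.univ.sigma (fun i => (Finset.range ((w2 i).length)).filter
      (fun t => (w2 i).getD t b = b ∧ ∃ L hf, d2.lang i = AtomLang.ssf L hf)) with hdom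
  set S : Finset ((EM q2 w2).V × α × (EM q2 w2).V) :=
    dom.image (fun z => (nuV q2 w2 z.1 z.2, b, nuV q2 w2 z.1 (z.2 + 1))) with hSdef
  have hSmem : ∀ e ∈ S, e ∈ (EM q2 w2).edges := by
    intro e he
    rw [hSdef, Finset.mem_image] at he
    obtain ⟨⟨i, t⟩, hz, rfl⟩ := he
    rw [hdom, Finset.mem_sigma, Finset.mem_filter, Finset.mem_range] at hz
    obtain ⟨-, ht, hget, -⟩ := hz
    apply (em_edge_iff q2 w2).mpr
    refine ⟨i, t, ht, rfl, ?_, rfl⟩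
    rw [← hget, List.getD_eq_get _ _ ⟨_, ht⟩]
  have hSin : ∀ u' v', (u', b, v') ∈ (EM q2 w2).edges → (u', b, v') ∈ S := by
    intro u' v' he
    replace he := (em_edge_iff q2 w2).mp he
    obtain ⟨i, t, ht, hu', hc, hv'⟩ := he
    rw [hSdef, Finset.mem_image]
    refine ⟨⟨i, t⟩, ?_, by rw [hu', hv']⟩
    rw [hdom, Finset.mem_sigma, Finset.mem_filter, Finset.mem_range]
    refine ⟨Finset.mem_univ _, ht, ?_, ?_⟩
    · rw [List.getD_eq_get _ _ ⟨_, ht⟩, ← hc]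
    · cases hl : d2.lang i with
      | ssf L hf => exact ⟨L, hf, rfl⟩
      | star ww =>
        exfalso
        have hokk := hok i
        rw [hl] at hokk
        obtain ⟨b', hb'A, rfl⟩ := hokk
        have hw2i := hw2 i
        rw [hl] at hw2i
        obtain ⟨nb, hwp⟩ := hw2i
        rw [wpow_single] at hwp
        have hgb : (w2 i).get ⟨t, ht⟩ = b' := by
          have h2 := List.get_of_eq hwp ⟨t, ht⟩
          simpa using h2
        rw [hc] at hbA
        rw [hgb] at hbA
        exact hb'A hbA
  have hcard : S.card ≤ ∑ i : Fin d2.k, langBound (d2.lang i) := by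
    refine le_trans (Finset.card_image_le) ?_
    rw [hdom, Finset.card_sigma]
    refine Finset.sum_le_sum ?_
    intro i _
    by_cases hssf : ∃ L, ∃ hf : L.Finite, d2.lang i = AtomLang.ssf L hf
    · obtain ⟨L, hf, hl⟩ := hssf
      refine le_trans (Finset.card_filter_le _ _) ?_
      rw [Finset.card_range, hl]
      have hw2i := hw2 i
      rw [hl] at hw2i
      exact langBound_le (h := hf) hw2i
    · have hfilter : (Finset.range ((w2 i).length)).filter
          (fun t => (w2 i).getD t b = b ∧ ∃ L, ∃ hf : L.Finite, d2.lang i = AtomLang.ssf L hf)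
          = ∅ := by
        refine Finset.filter_false_of_mem ?_
        intro t _
        rintro ⟨-, hssf'⟩
        exact hssf hssf'
      rw [hfilter]
      simp
  obtain ⟨f, hf0, hfn, hfe⟩ := hwalk
  obtain ⟨n', hn', hw'⟩ := awalk_shorten S hSmem b n u v
    ⟨f, hf0, hfn, fun t ht => hSin _ _ (hfe t ht)⟩
  exact ⟨n', le_trans hn' hcard, hw'⟩

/-- Step A: an `A`-bounded query admits, in every satisfied database, a witness
whose `A`-star atoms have uniformly bounded word lengths. -/
lemma stepA {V : Type} [Finite V] (q : List (SCRPQ α V)) (A : Set α) (hA : BddIn q A) :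
    ∃ m : ℕ, ∀ G : GDB α, SatS q G →
      ∃ d' ∈ q, ∃ w', Models G d' w' ∧
        ∀ (i : Fin d'.k) (b : α), b ∈ A → d'.lang i = AtomLang.star [b] →
          (w' i).length ≤ m := by
  classical
  obtain ⟨n', Q', hok, hequiv⟩ := hA
  refine ⟨(Q'.map (fun d => ∑ i : Fin d.k, langBound (d.lang i))).sum, ?_⟩
  intro G hG
  have hQ' : SatS Q' G := (hequiv G).mp hG
  rw [satS_iff] at hQ'
  obtain ⟨d2, hd2, w2, hmod2⟩ := hQ'
  have hm2 : ∑ i : Fin d2.k, langBound (d2.lang i) ≤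
      (Q'.map (fun d => ∑ i : Fin d.k, langBound (d.lang i))).sum :=
    List.single_le_sum (by simp) _ (List.mem_map_of_mem hd2)
  set ξ := EM (SCRPQ.toCRPQ d2) w2 with hξ
  have hself : SatS q ξ := by
    refine (hequiv ξ).mpr ?_
    rw [satS_iff]
    exact ⟨d2, hd2, w2, models_self d2 w2 hmod2.1⟩
  rw [satS_iff] at hself
  obtain ⟨d', hd', w3, hw3, ρ3, hwk3⟩ := hself
  obtain ⟨ρ2, hwk2⟩ := hmod2.2
  obtain ⟨h, hh⟩ := (expansion_homToG_iff (SCRPQ.toCRPQ d2) w2 G).mpr ⟨ρ2, hwk2⟩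
  have key : ∀ i : Fin d'.k, ∃ u : List α, u ∈ (d'.lang i).language ∧
      GWalk ξ u (ρ3 (d'.src i)) (ρ3 (d'.tgt i)) ∧
      (∀ b, b ∈ A → d'.lang i = AtomLang.star [b] →
        u.length ≤ ∑ j : Fin d2.k, langBound (d2.lang j)) := by
    intro i
    by_cases hstar : ∃ b, b ∈ A ∧ d'.lang i = AtomLang.star [b]
    · obtain ⟨b, hbA, hlang⟩ := hstar
      have hw3i := hw3 i
      rw [hlang] at hw3i
      obtain ⟨nb, hnb⟩ := hw3i
      have hwalk : AWalk ξ b nb (ρ3 (d'.src i)) (ρ3 (d'.tgt i)) := by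
        have := hwk3 i
        rw [hnb, wpow_single] at this
        exact gwalk_replicate.mp this
      obtain ⟨nb', hnb', hwalk'⟩ := bstar_shorten d2 w2 hmod2.1 (hok d2 hd2) b hbA hwalk
      refine ⟨wpow [b] nb', ?_, ?_, ?_⟩
      · rw [hlang]; exact ⟨nb', rfl⟩
      · rw [wpow_single]
        exact gwalk_replicate.mpr hwalk'
      · intro b' hb'A hlang'
        rw [hlang] at hlang'
        have hbb : b = b' := by
          injection hlang' with h1
          injection h1
        subst hbb
        simpa using hnb'
    · refine ⟨w3 i, hw3 i, hwk3 i, ?_⟩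
      intro b hbA hlang
      exact absurd ⟨b, hbA, hlang⟩ hstar
  choose w4 hw4lang hw4walk hw4len using key
  refine ⟨d', hd', w4, ⟨hw4lang, fun x => h (ρ3 x), fun i => (hw4walk i).map h hh⟩, ?_⟩
  intro i b hbA hlang
  exact le_trans (hw4len i b hbA hlang) hm2

end StepA

section Helpers

variable {α V : Type}

lemma k_le_natoms (q : List (SCRPQ α V)) {d : SCRPQ α V} (hd : d ∈ q) :
    d.k ≤ natoms q :=
  List.single_le_sum (by simp) _ (List.mem_map_of_mem hd)

lemma gwalk_single {G : GDB α} {c : α} {u v : G.V} :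
    GWalk G [c] u v ↔ (u, c, v) ∈ G.edges := by
  constructor
  · rintro ⟨f, h0, h1, he⟩
    have := he 0 (by simp)
    simp only [List.length_singleton] at h1
    rw [h0, h1] at this
    simpa using this
  · intro h
    refine ⟨fun t => if t = 0 then u else v, by simp, by simp, fun t ht => ?_⟩
    simp only [List.length_singleton] at ht
    interval_cases t
    simpa using h

lemma filter_lt_succ_card (s : Finset ℕ) (t : ℕ) (ht : t ∈ s) :
    (s.filter (· < t + 1)).card = (s.filter (· < t)).card + 1 := by
  classical
  have : s.filter (· < t + 1) = insert t (s.filter (· < t)) := by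
    ext x
    simp only [Finset.mem_filter, Finset.mem_insert]
    constructor
    · rintro ⟨hx, hlt⟩
      rcases Nat.lt_or_ge x t with h | h
      · exact Or.inr ⟨hx, h⟩
      · exact Or.inl (by omega)
    · rintro (rfl | ⟨hx, hlt⟩)
      · exact ⟨ht, by omega⟩
      · exact ⟨hx, by omega⟩
  rw [this, Finset.card_insert_of_notMem (by simp)]

lemma filter_ge_card (s : Finset ℕ) (t : ℕ) (ht : t ∈ s) :
    (s.filter (fun x => t ≤ x)).card = (s.filter (fun x => t + 1 ≤ x)).card + 1 := by
  classical
  have : s.filter (fun x => t ≤ x) = insert t (s.filter (fun x => t + 1 ≤ x)) := by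
    ext x
    simp only [Finset.mem_filter, Finset.mem_insert]
    constructor
    · rintro ⟨hx, hle⟩
      rcases Nat.lt_or_ge t x with h | h
      · exact Or.inr ⟨hx, by omega⟩
      · exact Or.inl (by omega)
    · rintro (rfl | ⟨hx, hle⟩)
      · exact ⟨ht, le_refl _⟩
      · exact ⟨hx, by omega⟩
  rw [this, Finset.card_insert_of_notMem (by simp)]

lemma choose_cstar (sp : Finset ℕ) (v D lo : ℕ) (hcard : sp.card ≤ v) :
    ∃ c, lo ≤ c ∧ c ≤ lo + v * (2 * D + 2) ∧
      ∀ s ∈ sp, s + D + 1 ≤ c ∨ c + D + 1 ≤ s := by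
  classical
  by_contra hno
  push_neg at hno
  have hblock : ∀ r ∈ Finset.range (v + 1), ∃ s ∈ sp,
      s + D + 1 > lo + r * (2 * D + 2) ∧ lo + r * (2 * D + 2) + D + 1 > s := by
    intro r hr
    rw [Finset.mem_range] at hr
    have h1 : lo ≤ lo + r * (2 * D + 2) := by omega
    have h2 : lo + r * (2 * D + 2) ≤ lo + v * (2 * D + 2) := by
      have := Nat.mul_le_mul_right (2 * D + 2) (show r ≤ v from by omega)
      omega
    obtain ⟨s, hs, hns⟩ := hno _ h1 h2
    exact ⟨s, hs, by omega, by omega⟩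
  choose sf hsf1 hsf2 using hblock
  have hinj : Set.InjOn (fun r => if h : r ∈ Finset.range (v + 1) then sf r h else 0)
      (Finset.range (v + 1)) := by
    intro r hr r' hr' heq
    simp only [Finset.mem_coe] at hr hr'
    simp only [] at heq
    have key : ∀ a b : ℕ, ∀ (ha : a ∈ Finset.range (v + 1)) (hb : b ∈ Finset.range (v + 1)),
        a < b → sf a ha = sf b hb → False := by
      intro a b ha hb hab he
      have hb1 := hsf2 a ha
      have hb2 := hsf2 b hb
      rw [he] at hb1
      have hmul : a * (2 * D + 2) + (2 * D + 2) ≤ b * (2 * D + 2) := by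
        have h3 : (a + 1) * (2 * D + 2) ≤ b * (2 * D + 2) :=
          Nat.mul_le_mul_right (2 * D + 2) (by omega)
        rw [Nat.succ_mul] at h3
        omega
      omega
    rw [dif_pos hr, dif_pos hr'] at heq
    by_contra hne2
    rcases Nat.lt_or_ge r r' with hlt | hge
    · exact key r r' hr hr' hlt heq
    · exact key r' r hr' hr (by omega) heq.symm
  have hcard2 : (Finset.range (v + 1)).card ≤ sp.card := by
    refine Finset.card_le_card_of_injOn _ ?_ hinj
    intro r hr
    simp only [dif_pos (Finset.mem_coe.mp hr)]
    exact hsf1 r hr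
  rw [Finset.card_range] at hcard2
  omega

lemma locV_nu_cases {α V : Type} [Finite V] (q : CRPQ α V) (w : Fin q.k → List α)
    (i : Fin q.k) (t : ℕ) (ht : t ≤ (w i).length) :
    ((t = 0 ∨ t = (w i).length) ∧ locV q w (nuV q w i t) = none) ∨
    (0 < t ∧ t < (w i).length ∧ locV q w (nuV q w i t) = some (i, t)) := by
  rcases Nat.eq_zero_or_pos t with rfl | hpos
  · exact Or.inl ⟨Or.inl rfl, locV_nu_zero q w i⟩
  · by_cases hlen : t = (w i).length
    · subst hlen
      exact Or.inl ⟨Or.inr rfl, locV_nu_len q w i⟩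
    · exact Or.inr ⟨hpos, by omega, locV_nu_mid q w hpos (by omega)⟩

lemma not_PI_nu {α V : Type} [Finite V] (q : CRPQ α V) (ws : Fin q.k → List α)
    (I : Finset (Fin q.k)) {i : Fin q.k} (hi : i ∉ I) (t : ℕ) (ht : t ≤ (ws i).length) :
    ¬ PIem q ws I (nuV q ws i t) := by
  rintro ⟨j, hj, p, hp⟩
  rcases locV_nu_cases q ws i t ht with ⟨-, hnone⟩ | ⟨-, -, hsome⟩
  · rw [hnone] at hp
    exact Option.some_ne_none _ hp.symm
  · rw [hsome] at hp
    rw [Option.some.injEq, Prod.ext_iff] at hp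
    obtain ⟨h1, -⟩ := hp
    simp only at h1
    exact hi (h1 ▸ hj)

lemma restrict_star_pos {α : Type} {A : Set α} {Z : ℕ} {b : α} (hb : b ∈ A) :
    (AtomLang.star [b]).restrict A Z =
      AtomLang.ssf (wpow [b] '' Set.Iic Z) ((Set.finite_Iic Z).image _) := by
  simp only [AtomLang.restrict]
  rw [if_pos ⟨b, hb, rfl⟩]

lemma restrict_star_neg {α : Type} {A : Set α} {Z : ℕ} {b : α} (hb : b ∉ A) :
    (AtomLang.star [b]).restrict A Z = AtomLang.star [b] := by
  simp only [AtomLang.restrict]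
  rw [if_neg]
  rintro ⟨a', ha', h⟩
  have : b = a' := by injection h
  exact hb (this ▸ ha')

end Helpers

section MainCase

variable {α V : Type}

lemma main_case [Fintype α] [Fintype V] (q : List (SCRPQ α V))
    (hclass : ∀ d ∈ q, ∀ i : Fin d.k, (d.lang i).in_a_aStar) (A : Set α)
    (hA : BddIn q A)
    (hZ : natoms q + (natoms q * (2 * natoms q + 2) + natoms q) ≤ Zbound q)
    (G : GDB α) (d : SCRPQ α V) (hd : d ∈ q) (w : Fin d.k → List α)
    (hwl : ∀ i, w i ∈ (d.lang i).language)
    (ρ₀ : V → G.V)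
    (hwk₀ : ∀ i, GWalk G (w i) (ρ₀ (d.src i)) (ρ₀ (d.tgt i))) :
    ∃ d2 ∈ qrestrict q A (Zbound q), ∃ w2, Models G d2 w2 := by
  classical
  set K := natoms q with hKdef
  set z₀ := 2 * K + 2 with hz₀def
  set qh := SCRPQ.toCRPQ d with hqh
  obtain ⟨m, hm⟩ := stepA q A hA
  set I : Finset (Fin d.k) := Finset.univ.filter
    (fun i => (∃ b ∈ A, d.lang i = AtomLang.star [b]) ∧ z₀ < (w i).length) with hIdef
  set D := m + 4 with hDdef
  set T := (m + 2 + (Fintype.card V + 1) * (2 * D + 2)) + (m + z₀ + 16) with hTdef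
  have hT2 : 2 ≤ T := by omega
  have hTm : m < T := by omega
  have hIlet : ∀ i : Fin d.k, ∃ b : α,
      i ∈ I → (b ∈ A ∧ d.lang i = AtomLang.star [b] ∧ z₀ < (w i).length) := by
    intro i
    by_cases hi : i ∈ I
    · rw [hIdef, Finset.mem_filter] at hi
      obtain ⟨-, ⟨b, hb, hl⟩, hlen⟩ := hi
      exact ⟨b, fun _ => ⟨hb, hl, hlen⟩⟩
    · have hcls := hclass d hd i
      cases hcl : d.lang i with
      | ssf L hf =>
        rw [hcl] at hcls
        obtain ⟨b, -⟩ := hcls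
        exact ⟨b, fun h => absurd h hi⟩
      | star ww =>
        rw [hcl] at hcls
        obtain ⟨b, -⟩ := hcls
        exact ⟨b, fun h => absurd h hi⟩
  choose lett hlett using hIlet
  set ws : Fin d.k → List α := fun i => if i ∈ I then List.replicate T (lett i) else w i
    with hwsdef
  have hws_eq : ∀ i ∉ I, ws i = w i := by
    intro i hi
    rw [hwsdef]
    simp [hi]
  have hwrep : ∀ i ∈ I, w i = List.replicate ((w i).length) (lett i) := by
    intro i hi
    obtain ⟨-, hl, -⟩ := hlett i hi
    have hwli := hwl i
    rw [hl] at hwli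
    obtain ⟨n, hn⟩ := hwli
    rw [hn, wpow_single]
    simp
  have hlen_ws : ∀ i ∈ I, (ws i).length = T := by
    intro i hi
    rw [hwsdef]
    simp [hi]
  have hrun : ∀ i ∈ I, ∃ c, ws i = List.replicate T c ∧
      w i = List.replicate ((w i).length) c := by
    intro i hi
    refine ⟨lett i, ?_, hwrep i hi⟩
    rw [hwsdef]
    simp [hi]
  have hne : ∀ i, ws i = [] → w i = [] := by
    intro i h
    by_cases hi : i ∈ I
    · exfalso
      rw [hwsdef] at h
      simp only [hi, if_true] at h
      have := congrArg List.length h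
      simp at this
    · rwa [hws_eq i hi] at h
  have hwsl : ∀ i, ws i ∈ (d.lang i).language := by
    intro i
    by_cases hi : i ∈ I
    · obtain ⟨-, hl, -⟩ := hlett i hi
      rw [hwsdef]
      simp only [hi, if_true]
      rw [hl]
      exact ⟨T, (wpow_single _ _).symm⟩
    · rw [hws_eq i hi]
      exact hwl i
  have hnj : ∀ j ∈ I, z₀ < (w j).length := fun j hj => (hlett j hj).2.2
  -- step A applied to the pumped canonical model
  have hsat : SatS q (EM qh ws) := by
    rw [satS_iff]
    exact ⟨d, hd, ws, models_self d ws hwsl⟩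
  obtain ⟨d', hd', w', ⟨hw'l, ρ', hwk'⟩, hlen'⟩ := hm (EM qh ws) hsat
  have hk' : d'.k ≤ K := k_le_natoms q hd'
  -- positions, specials, cut point
  set posOf : (EM qh ws).V → ℕ := fun u => (locV qh ws u).elim 0 Prod.snd with hposdef
  set specials : Finset ℕ := Finset.univ.image (fun x : V => posOf (ρ' x)) with hspdef
  have hspcard : specials.card ≤ Fintype.card V :=
    le_trans Finset.card_image_le (by simp)
  obtain ⟨cs, hcs_lo, hcs_hi, hcs_avoid⟩ :=
    choose_cstar specials (Fintype.card V) D (m + 2) hspcard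
  have hcsT : cs + m + 2 ≤ T := by
    have h1 : Fintype.card V * (2 * D + 2) ≤ (Fintype.card V + 1) * (2 * D + 2) :=
      Nat.mul_le_mul_right _ (by omega)
    omega
  have hpos_special : ∀ x : V, posOf (ρ' x) ∈ specials := by
    intro x
    rw [hspdef, Finset.mem_image]
    exact ⟨x, Finset.mem_univ _, rfl⟩
  have hpos_eq : ∀ (u : (EM qh ws).V) (j : Fin d.k) (p : ℕ),
      locV qh ws u = some (j, p) → posOf u = p := by
    intro u j p hp
    rw [hposdef]
    simp only []
    rw [hp]
    rfl
  -- pinned positions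
  set PinProp : Fin d.k → ℕ → Prop := fun j t => ∃ ι : Fin d'.k,
    ρ' (d'.src ι) = nuV qh ws j t ∧ ρ' (d'.tgt ι) = nuV qh ws j (t + 1) ∧
      (w' ι).length = 1 with hPinDef
  set pinned : Fin d.k → Finset ℕ := fun j =>
    (Finset.univ.image (fun ι : Fin d'.k => posOf (ρ' (d'.src ι)))).filter
      (fun t => t < T ∧ PinProp j t) with hpinDef
  have hpincard : ∀ j, (pinned j).card ≤ K := by
    intro j
    refine le_trans (Finset.card_filter_le _ _) (le_trans Finset.card_image_le ?_)
    simpa using hk'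
  have hpin_special : ∀ j t, t ∈ pinned j → t ∈ specials := by
    intro j t ht
    rw [hpinDef, Finset.mem_filter, Finset.mem_image] at ht
    obtain ⟨⟨ι, -, hι⟩, -, -⟩ := ht
    rw [hspdef, Finset.mem_image]
    exact ⟨d'.src ι, Finset.mem_univ _, hι⟩
  have hpin_lt : ∀ j t, t ∈ pinned j → t < T := by
    intro j t ht
    rw [hpinDef, Finset.mem_filter] at ht
    exact ht.2.1
  have hpin_in : ∀ j ∈ I, ∀ t, t < T → PinProp j t → t ∈ pinned j := by
    intro j hj t hTt hp
    rw [hpinDef, Finset.mem_filter]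
    refine ⟨?_, hTt, hp⟩
    obtain ⟨ι, hsrc, -, -⟩ := hp
    rw [Finset.mem_image]
    refine ⟨ι, Finset.mem_univ _, ?_⟩
    rw [hsrc]
    rcases locV_nu_cases qh ws j t (by rw [hlen_ws j hj]; omega) with ⟨hc, hnone⟩ | ⟨-, -, hsome⟩
    · rw [hposdef]
      simp only []
      rw [hnone]
      rcases hc with rfl | hc
      · rfl
      · rw [hlen_ws j hj] at hc
        omega
    · exact hpos_eq _ j t hsome
  -- the compression maps
  set LOW : Fin d.k → ℕ → ℕ := fun j p => ((pinned j).filter (· < p)).card with hLOWdef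
  set HIG : Fin d.k → ℕ → ℕ := fun j p => ((pinned j).filter (fun t => p ≤ t)).card
    with hHIGdef
  set F : Fin d.k → ℕ → ℕ := fun j p => if p ≤ cs then LOW j p else (w j).length - HIG j p
    with hFdef
  have hLOWcard : ∀ j p, LOW j p ≤ K := fun j p =>
    le_trans (Finset.card_filter_le _ _) (hpincard j)
  have hHIGcard : ∀ j p, HIG j p ≤ K := fun j p =>
    le_trans (Finset.card_filter_le _ _) (hpincard j)
  have hLOWmono : ∀ j p p', p ≤ p' → LOW j p ≤ LOW j p' := by
    intro j p p' hpp
    refine Finset.card_le_card ?_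
    intro x hx
    rw [Finset.mem_filter] at hx ⊢
    exact ⟨hx.1, by have := hx.2; omega⟩
  have hHIGmono : ∀ j p p', p ≤ p' → HIG j p' ≤ HIG j p := by
    intro j p p' hpp
    refine Finset.card_le_card ?_
    intro x hx
    rw [Finset.mem_filter] at hx ⊢
    exact ⟨hx.1, by omega⟩
  have hF0 : ∀ j ∈ I, F j 0 = 0 := by
    intro j hj
    rw [hFdef]
    simp only [Nat.zero_le, if_pos]
    rw [hLOWdef]
    simp
  have hFT : ∀ j ∈ I, F j T = (w j).length := by
    intro j hj
    rw [hFdef]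
    simp only []
    rw [if_neg (by omega)]
    have : HIG j T = 0 := by
      rw [hHIGdef]
      simp only []
      rw [Finset.card_eq_zero, Finset.filter_eq_empty_iff]
      intro t ht
      have := hpin_lt j t ht
      omega
    rw [this]
    omega
  have hFle : ∀ j ∈ I, ∀ p, F j p ≤ (w j).length := by
    intro j hj p
    rw [hFdef]
    simp only []
    split
    · have h1 := hLOWcard j p
      have h2 := hnj j hj
      omega
    · omega
  have hFmono : ∀ j ∈ I, ∀ p p', p ≤ p' → F j p ≤ F j p' := by
    intro j hj p p' hpp
    rw [hFdef]
    simp only []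
    split <;> split
    · exact hLOWmono j p p' hpp
    · have h1 := hLOWcard j p
      have h2 := hHIGcard j p'
      have h3 := hnj j hj
      omega
    · omega
    · have := hHIGmono j p p' hpp
      have h3 := hnj j hj
      have h4 := hHIGcard j p
      omega
  have hlow : ∀ j ∈ I, ∀ b, b ≤ m → F j b ≤ K := by
    intro j hj b hb
    rw [hFdef]
    simp only []
    rw [if_pos (by omega)]
    exact hLOWcard j b
  have hhigh : ∀ j ∈ I, ∀ p, T - m ≤ p → p < T → (w j).length - F j p ≤ K := by
    intro j hj p hp1 hp2
    rw [hFdef]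
    simp only []
    rw [if_neg (by omega)]
    have h1 := hHIGcard j p
    omega
  have hslope : ∀ j ∈ I, ∀ t, t ∈ pinned j → F j (t + 1) = F j t + 1 := by
    intro j hj t ht
    have hsp := hpin_special j t ht
    rcases hcs_avoid t hsp with hlo | hhi
    · rw [hFdef]
      simp only []
      rw [if_pos (by omega), if_pos (by omega), hLOWdef]
      simp only []
      exact filter_lt_succ_card _ t ht
    · rw [hFdef]
      simp only []
      rw [if_neg (by omega), if_neg (by omega), hHIGdef]
      simp only []
      have := filter_ge_card (pinned j) t ht
      have h2 := hHIGcard j t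
      rw [hHIGdef] at h2
      simp only [] at h2
      have h3 := hnj j hj
      omega
  have hdiff : ∀ j ∈ I, ∀ p, p ∈ specials → ∀ L'', L'' ≤ m → p + L'' ≤ T →
      F j (p + L'') - F j p ≤ K := by
    intro j hj p hps L'' hL'' hpT
    rcases hcs_avoid p hps with hlo | hhi
    · rw [hFdef]
      simp only []
      rw [if_pos (by omega), if_pos (by omega)]
      have h1 := hLOWcard j (p + L'')
      omega
    · rw [hFdef]
      simp only []
      rw [if_neg (by omega), if_neg (by omega)]
      have h1 := hHIGcard j p
      have h2 := hHIGcard j (p + L'')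
      have h3 := hnj j hj
      have h4 := hHIGmono j p (p + L'') (by omega)
      omega
  -- per-atom witness construction
  have key2 : ∀ ι : Fin d'.k, ∃ u : List α,
      u ∈ ((d'.lang ι).restrict A (Zbound q)).language ∧
      GWalk (EM qh w) u (Psi qh w ws I F hne (ρ' (d'.src ι)))
        (Psi qh w ws I F hne (ρ' (d'.tgt ι))) := by
    intro ι
    have hcls := hclass d' hd' ι
    cases hcl : d'.lang ι with
    | ssf L hf =>
      rw [hcl] at hcls
      obtain ⟨c, rfl⟩ := hcls
      have hwι : w' ι = [c] := by
        have h1 := hw'l ι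
        rw [hcl] at h1
        exact h1
      have hedge : (ρ' (d'.src ι), c, ρ' (d'.tgt ι)) ∈ (EM qh ws).edges := by
        have h1 := hwk' ι
        rw [hwι] at h1
        exact gwalk_single.mp h1
      have hnew : (Psi qh w ws I F hne (ρ' (d'.src ι)), c,
          Psi qh w ws I F hne (ρ' (d'.tgt ι))) ∈ (EM qh w).edges := by
        have hedge2 := hedge
        replace hedge2 := (em_edge_iff qh ws).mp hedge2
        obtain ⟨i, t, ht, hu, hc, hv⟩ := hedge2
        by_cases hiI : i ∈ I
        · have hlT := hlen_ws i hiI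
          have hPin : PinProp i t := ⟨ι, by rw [hu], by rw [hv], by rw [hwι]; rfl⟩
          have htT : t < T := by rw [hlT] at ht; exact ht
          have hmem := hpin_in i hiI t htT hPin
          have hstep := hslope i hiI t hmem
          have hwseval : ws i = List.replicate T (lett i) := by
            rw [hwsdef]; simp [hiI]; exact fun h => absurd hiI h
          have hlabel : c = lett i := by
            rw [hc]
            have h2 := List.get_of_eq hwseval ⟨t, ht⟩
            simpa using h2
          rw [hu, hv,
            Psi_nu qh w ws I T F hne hlen_ws hws_eq hF0 hFT i t (by omega),
            Psi_nu qh w ws I T F hne hlen_ws hws_eq hF0 hFT i (t + 1) (by omega)]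
          erw [if_pos hiI, if_pos hiI]
          apply (em_edge_iff qh w).mpr
          have hlt : F i t < (w i).length := by
            have h3 := hFle i hiI (t + 1)
            omega
          refine ⟨i, F i t, hlt, rfl, ?_, ?_⟩
          · rw [hlabel]
            symm
            have h2 := List.get_of_eq (hwrep i hiI) ⟨F i t, hlt⟩
            simpa using h2
          · rw [hstep]
        · have hu' : ¬ PIem qh ws I (ρ' (d'.src ι)) := by
            rw [hu]; exact not_PI_nu qh ws I hiI t (by omega)
          have hv' : ¬ PIem qh ws I (ρ' (d'.tgt ι)) := by
            rw [hv]; exact not_PI_nu qh ws I hiI (t + 1) (by omega)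
          obtain ⟨i2, t2, ht2, -, hpu, hpc, hpv⟩ :=
            core_edge qh w ws I T F hne hlen_ws hws_eq hF0 hFT hT2 hedge hu' hv'
          rw [hpu, hpv]; apply (em_edge_iff qh w).mpr
          exact ⟨i2, t2, ht2, rfl, hpc, rfl⟩
      exact ⟨[c], rfl, gwalk_single.mpr hnew⟩
    | star bw =>
      rw [hcl] at hcls
      obtain ⟨b, rfl⟩ := hcls
      have hwι := hw'l ι
      rw [hcl] at hwι
      obtain ⟨nb, hnb⟩ := hwι
      have hAw : AWalk (EM qh ws) b nb (ρ' (d'.src ι)) (ρ' (d'.tgt ι)) := by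
        have h1 := hwk' ι
        rw [hnb, wpow_single] at h1
        exact gwalk_replicate.mp h1
      by_cases hbA : b ∈ A
      · have hLm : nb ≤ m := by
          have h1 := hlen' ι b hbA hcl
          rw [hnb] at h1
          simpa using h1
        set domS : Finset ((_ : Fin d.k) × ℕ) := Finset.univ.sigma (fun i =>
          (Finset.range ((w i).length)).filter (fun t => i ∉ I ∧ (w i).getD t b = b))
          with hdomS
        set Sb : Finset ((EM qh w).V × α × (EM qh w).V) :=
          domS.image (fun z => (nuV qh w z.1 z.2, b, nuV qh w z.1 (z.2 + 1))) with hSbdef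
        have hSmem : ∀ e ∈ Sb, e ∈ (EM qh w).edges := by
          intro e he
          rw [hSbdef, Finset.mem_image] at he
          obtain ⟨⟨i, t⟩, hz, rfl⟩ := he
          rw [hdomS, Finset.mem_sigma, Finset.mem_filter, Finset.mem_range] at hz
          obtain ⟨-, ht, -, hgd⟩ := hz
          apply (em_edge_iff qh w).mpr
          refine ⟨i, t, ht, rfl, ?_, rfl⟩
          rw [← hgd, List.getD_eq_get _ _ ⟨_, ht⟩]
        have hSin : ∀ i ∉ I, ∀ (t : ℕ) (ht : t < (w i).length),
            (w i).get ⟨t, ht⟩ = b → (nuV qh w i t, b, nuV qh w i (t + 1)) ∈ Sb := by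
          intro i hiI t ht hget
          rw [hSbdef, Finset.mem_image]
          refine ⟨⟨i, t⟩, ?_, rfl⟩
          rw [hdomS, Finset.mem_sigma, Finset.mem_filter, Finset.mem_range]
          exact ⟨Finset.mem_univ _, ht, hiI, by rw [List.getD_eq_get _ _ ⟨_, ht⟩, hget]⟩
        have hScard : Sb.card ≤ K * z₀ := by
          refine le_trans Finset.card_image_le ?_
          rw [hdomS, Finset.card_sigma]
          refine le_trans (Finset.sum_le_card_nsmul _ _ z₀ ?_) ?_
          · intro i _
            by_cases hfe : ((Finset.range ((w i).length)).filter
                (fun t => i ∉ I ∧ (w i).getD t b = b)) = ∅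
            · rw [hfe]
              simp
            · obtain ⟨t, htmem⟩ := Finset.nonempty_of_ne_empty hfe
              rw [Finset.mem_filter, Finset.mem_range] at htmem
              obtain ⟨htlen, hiI, hgd⟩ := htmem
              have hlenle : (w i).length ≤ z₀ := by
                have hcls2 := hclass d hd i
                cases hcli : d.lang i with
                | ssf L2 hf2 =>
                  rw [hcli] at hcls2
                  obtain ⟨c', hL2⟩ := hcls2
                  have hwi := hwl i
                  rw [hcli] at hwi
                  have hwi2 : w i ∈ L2 := hwi
                  rw [hL2] at hwi2
                  have hwc : w i = [c'] := hwi2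
                  rw [hwc]
                  simp
                  omega
                | star ww2 =>
                  rw [hcli] at hcls2
                  obtain ⟨c', rfl⟩ := hcls2
                  have hwi := hwl i
                  rw [hcli] at hwi
                  obtain ⟨n, hn⟩ := hwi
                  have hb_c : b = c' := by
                    have hg : (w i).get ⟨t, htlen⟩ = c' := by
                      have h2 := List.get_of_eq (by rw [hn, wpow_single] :
                        w i = List.replicate n c') ⟨t, htlen⟩
                      have h3 : t < n := by
                        have := htlen
                        rw [hn] at this
                        simpa using this
                      simpa using h2
                    rw [List.getD_eq_get _ _ ⟨_, htlen⟩] at hgd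
                    rw [hg] at hgd
                    exact hgd.symm
                  by_contra hgt
                  push_neg at hgt
                  refine hiI ?_
                  rw [hIdef, Finset.mem_filter]
                  exact ⟨Finset.mem_univ _, ⟨c', hb_c ▸ hbA, by rw [hcli]⟩, hgt⟩
              exact le_trans (Finset.card_filter_le _ _)
                (by rw [Finset.card_range]; exact hlenle)
          · rw [smul_eq_mul, Finset.card_univ, Fintype.card_fin]
            exact Nat.mul_le_mul_right _ (k_le_natoms q hd)
        obtain ⟨f, hf0, hfn, hfe⟩ := hAw
        have hstart : ∀ j p, j ∈ I → locV qh ws (f 0) = some (j, p) →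
            ∀ L'', L'' ≤ m → p + L'' ≤ T → F j (p + L'') - F j p ≤ K := by
          intro j p hj hlocp L'' h1 h2
          refine hdiff j hj p ?_ L'' h1 h2
          have h3 := hpos_eq _ j p hlocp
          rw [hf0] at h3
          rw [← h3]
          exact hpos_special (d'.src ι)
        obtain ⟨L', hL', hwalkM⟩ := transfer_awalk qh w ws I T F hne hlen_ws hws_eq hF0
          hFT b Sb m K hSmem hSin hT2 hTm hrun hFmono hFle hlow hhigh f nb hLm hfe hstart
        rw [hf0, hfn] at hwalkM
        refine ⟨wpow [b] L', ?_, ?_⟩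
        · show wpow [b] L' ∈ ((AtomLang.star [b]).restrict A (Zbound q)).language
          rw [restrict_star_pos hbA]
          refine ⟨L', ?_, rfl⟩
          show L' ≤ Zbound q
          have h4 : Sb.card ≤ K * z₀ := hScard
          omega
        · rw [wpow_single]
          exact gwalk_replicate.mpr hwalkM
      · have hwalk : AWalk (EM qh w) b nb (Psi qh w ws I F hne (ρ' (d'.src ι)))
            (Psi qh w ws I F hne (ρ' (d'.tgt ι))) := by
          obtain ⟨f, hf0, hfn, hfe⟩ := hAw
          refine ⟨fun t => Psi qh w ws I F hne (f t),
            by show Psi qh w ws I F hne (f 0) = _; rw [hf0],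
            by show Psi qh w ws I F hne (f nb) = _; rw [hfn], ?_⟩
          intro t ht
          show (Psi qh w ws I F hne (f t), b, Psi qh w ws I F hne (f (t + 1)))
            ∈ (EM qh w).edges
          have he := hfe t ht
          have he2 := he
          replace he2 := (em_edge_iff qh ws).mp he2
          obtain ⟨i, t', ht', hu, hc, hv⟩ := he2
          have hiI : i ∉ I := by
            intro hiI
            have hwseval : ws i = List.replicate T (lett i) := by
              rw [hwsdef]; simp [hiI]; exact fun h => absurd hiI h
            have hlabel : b = lett i := by
              rw [hc]
              have h2 := List.get_of_eq hwseval ⟨t', ht'⟩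
              simpa using h2
            exact hbA (hlabel ▸ (hlett i hiI).1)
          have hu' : ¬ PIem qh ws I (f t) := by
            rw [hu]; exact not_PI_nu qh ws I hiI t' (by omega)
          have hv' : ¬ PIem qh ws I (f (t + 1)) := by
            rw [hv]; exact not_PI_nu qh ws I hiI (t' + 1) (by omega)
          obtain ⟨i2, t2, ht2, -, hpu, hpc, hpv⟩ :=
            core_edge qh w ws I T F hne hlen_ws hws_eq hF0 hFT hT2 he hu' hv'
          rw [hpu, hpv]; apply (em_edge_iff qh w).mpr
          exact ⟨i2, t2, ht2, rfl, hpc, rfl⟩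
        refine ⟨wpow [b] nb, ?_, ?_⟩
        · show wpow [b] nb ∈ ((AtomLang.star [b]).restrict A (Zbound q)).language
          rw [restrict_star_neg hbA]
          exact ⟨nb, rfl⟩
        · rw [wpow_single]
          exact gwalk_replicate.mpr hwalk
  choose w2 hw2l hw2walk using key2
  obtain ⟨h, hh⟩ := (expansion_homToG_iff qh w G).mpr ⟨ρ₀, hwk₀⟩
  exact ⟨SCRPQ.restrict A (Zbound q) d', List.mem_map_of_mem hd', w2,
    hw2l, fun x => h (Psi qh w ws I F hne (ρ' x)), fun ι => (hw2walk ι).map h hh⟩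

end MainCase

section Final

variable {α V : Type}

lemma restrict_language_sub {A : Set α} {Z : ℕ} (l : AtomLang α) :
    ((l.restrict A Z).language) ⊆ l.language := by
  cases l with
  | ssf L h => exact subset_rfl
  | star w =>
    intro u hu
    simp only [AtomLang.restrict] at hu
    split at hu
    · obtain ⟨n, -, rfl⟩ := hu
      exact ⟨n, rfl⟩
    · exact hu

lemma zbound_eq [Fintype V] (q : List (SCRPQ α V))
    (hclass : ∀ d ∈ q, ∀ i : Fin d.k, (d.lang i).in_a_aStar)
    (hssf : ∃ d ∈ q, ∃ i : Fin d.k, ∃ (L : Set (List α)) (hf : L.Finite),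
      d.lang i = AtomLang.ssf L hf) :
    Zbound q = natoms q ^ 3 * Fintype.card V := by
  unfold Zbound
  have h2 : (∏ᶠ w ∈ recWords q, w.length) = 1 := by
    apply finprod_mem_of_eqOn_one
    intro x hx
    obtain ⟨d, hd, i, hl⟩ := hx
    have hcls := hclass d hd i
    rw [hl] at hcls
    obtain ⟨a, rfl⟩ := hcls
    simp
  have h1 : nrBound q = 1 := by
    unfold nrBound
    have hset : {n | ∃ d ∈ q, ∃ i : Fin d.k, ∃ (L : Set (List α)) (h : L.Finite),
        d.lang i = AtomLang.ssf L h ∧ ∃ u ∈ L, u.length = n} = {1} := by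
      ext n
      simp only [Set.mem_setOf_eq, Set.mem_singleton_iff]
      constructor
      · rintro ⟨d, hd, i, L, hf, hl, u, huL, rfl⟩
        have hcls := hclass d hd i
        rw [hl] at hcls
        obtain ⟨a, rfl⟩ := hcls
        have hu : u = [a] := huL
        rw [hu]
        rfl
      · rintro rfl
        obtain ⟨d, hd, i, L, hf, hl⟩ := hssf
        have hcls := hclass d hd i
        rw [hl] at hcls
        obtain ⟨a, hLa⟩ := hcls
        refine ⟨d, hd, i, L, hf, hl, [a], ?_, rfl⟩
        rw [hLa]
        rfl
    rw [hset, csSup_singleton]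
  rw [h1, h2]
  ring

end Final

end Aux

/-- if `q ∈ UCRPQ(a, a*)` is `A`-bounded then `q ≡ q(A, Z)` for
`Z = ‖q‖³ · N · |vars(q)| · Π_{w ∈ W} |w|`. -/
theorem statement15 {α V : Type} [Fintype α] [Fintype V] (q : List (SCRPQ α V))
    (hclass : ∀ d ∈ q, ∀ i : Fin d.k, (d.lang i).in_a_aStar) (A : Set α)
    (hA : BddIn q A) :
    QEquiv (SatS q) (SatS (qrestrict q A (Zbound q))) := by
  classical
  intro G
  constructor
  · intro hsat
    rw [satS_iff] at hsat
    obtain ⟨d, hd, w, hwl, ρ₀, hwk₀⟩ := hsat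
    rw [satS_iff]
    by_cases hC0 : ∃ i : Fin d.k, ∃ b ∈ A, d.lang i = AtomLang.star [b]
    · obtain ⟨i₀, b₀, hb₀A, hlang₀⟩ := hC0
      by_cases hv1 : Fintype.card V ≤ 1
      · -- single-variable case: collapse all A-stars to ε
        have hsub : Subsingleton V := Fintype.card_le_one_iff_subsingleton.mp hv1
        have key : ∀ i : Fin d.k, ∃ u, u ∈ ((d.lang i).restrict A (Zbound q)).language ∧
            GWalk G u (ρ₀ (d.src i)) (ρ₀ (d.tgt i)) := by
          intro i
          have hcls := hclass d hd i
          cases hcl : d.lang i with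
          | ssf L hf =>
            refine ⟨w i, ?_, hwk₀ i⟩
            have := hwl i
            rw [hcl] at this
            exact this
          | star ww =>
            rw [hcl] at hcls
            obtain ⟨b, rfl⟩ := hcls
            by_cases hbA : b ∈ A
            · refine ⟨wpow [b] 0, ?_, ?_⟩
              · rw [restrict_star_pos hbA]
                exact ⟨0, Nat.zero_le _, rfl⟩
              · show GWalk G [] _ _
                have heq : d.src i = d.tgt i := Subsingleton.elim _ _
                exact ⟨fun _ => ρ₀ (d.src i), rfl, by rw [heq], fun t ht => absurd ht (by simp)⟩
            · refine ⟨w i, ?_, hwk₀ i⟩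
              rw [restrict_star_neg hbA]
              have := hwl i
              rw [hcl] at this
              exact this
        choose w2 hw2 hw2w using key
        exact ⟨SCRPQ.restrict A (Zbound q) d, List.mem_map_of_mem hd, w2, hw2, ρ₀, hw2w⟩
      · push_neg at hv1
        by_cases hssf : ∃ d2 ∈ q, ∃ i : Fin d2.k, ∃ (L : Set (List α)) (hf : L.Finite),
            d2.lang i = AtomLang.ssf L hf
        · -- main case
          have hK2 : 2 ≤ natoms q := by
            obtain ⟨d2, hd2, i2, L, hf, hl2⟩ := hssf
            by_cases hdd : d2 = d
            · subst hdd
              have hne : i₀ ≠ i2 := by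
                intro h
                rw [h] at hlang₀
                rw [hlang₀] at hl2
                cases hl2
              have h2 : 2 ≤ d2.k := by
                by_contra hlt
                push_neg at hlt
                have ha := i₀.isLt
                have hb := i2.isLt
                have : (i₀ : ℕ) = (i2 : ℕ) := by omega
                exact hne (Fin.ext this)
              exact le_trans h2 (k_le_natoms q hd2)
            · have hperm : q.Perm (d :: q.erase d) := List.perm_cons_erase hd
              have hsum : natoms q = d.k + natoms (q.erase d) := by
                unfold natoms
                rw [List.Perm.sum_eq (List.Perm.map _ hperm)]
                simp [natoms]
              have hd2' : d2 ∈ q.erase d := (List.mem_erase_of_ne hdd).mpr hd2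
              have h1 : 1 ≤ d.k := by have := i₀.isLt; omega
              have h3 : d2.k ≤ natoms (q.erase d) := k_le_natoms _ hd2'
              have h4 : 1 ≤ d2.k := by have := i2.isLt; omega
              omega
          have hZeq := zbound_eq q hclass hssf
          have hZ : natoms q + (natoms q * (2 * natoms q + 2) + natoms q) ≤ Zbound q := by
            rw [hZeq]
            set K := natoms q
            set v := Fintype.card V
            have h1 : K + (K * (2 * K + 2) + K) = 2 * K^2 + 4 * K := by ring
            rw [h1]
            have e1 : 4 * K ≤ 2 * K ^ 2 := by nlinarith
            have e2 : 4 * K ^ 2 ≤ 2 * K ^ 3 := by nlinarith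
            have e3 : 2 * K ^ 3 ≤ K ^ 3 * v := by nlinarith
            omega
          exact main_case q hclass A hA hZ G d hd w hwl ρ₀ hwk₀
        · -- no non-recursive atom anywhere: all atoms collapse to ε
          refine ⟨SCRPQ.restrict A (Zbound q) d, List.mem_map_of_mem hd,
            fun _ => [], ?_, fun _ => ρ₀ (d.src i₀), ?_⟩
          · intro i
            have hcls := hclass d hd i
            show ([] : List α) ∈ ((d.lang i).restrict A (Zbound q)).language
            cases hcl : d.lang i with
            | ssf L hf => exact absurd ⟨d, hd, i, L, hf, hcl⟩ hssf
            | star ww =>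
              rw [hcl] at hcls
              obtain ⟨b, rfl⟩ := hcls
              by_cases hbA : b ∈ A
              · rw [restrict_star_pos hbA]
                exact ⟨0, Nat.zero_le _, rfl⟩
              · rw [restrict_star_neg hbA]
                exact ⟨0, rfl⟩
          · intro i
            exact ⟨fun _ => ρ₀ (d.src i₀), rfl, rfl, fun t ht => absurd ht (by simp)⟩
    · -- d has no A-star atom: unchanged witness
      push_neg at hC0
      refine ⟨SCRPQ.restrict A (Zbound q) d, List.mem_map_of_mem hd, w, ?_, ρ₀, hwk₀⟩
      intro i
      have hcls := hclass d hd i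
      show w i ∈ ((d.lang i).restrict A (Zbound q)).language
      cases hcl : d.lang i with
      | ssf L hf =>
        have := hwl i
        rw [hcl] at this
        exact this
      | star ww =>
        rw [hcl] at hcls
        obtain ⟨b, rfl⟩ := hcls
        have hbA : b ∉ A := fun hb => hC0 i b hb hcl
        rw [restrict_star_neg hbA]
        have := hwl i
        rw [hcl] at this
        exact this
  · intro hsat
    rw [satS_iff] at hsat ⊢
    obtain ⟨d2, hd2, w2, hw2l, ρ2, hwk2⟩ := hsat
    rw [qrestrict, List.mem_map] at hd2
    obtain ⟨d0, hd0, rfl⟩ := hd2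
    exact ⟨d0, hd0, w2, fun i => restrict_language_sub _ (hw2l i), ρ2, hwk2⟩

end Paper
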